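/- arXiv:1801.05364 — 6 statements merged into one kernel-verified Lean document; each statement's English description precedes it below -/
import Mathlib

section
/- (Existence of minimizers / nonempty resolvent) Let V be a real Banach space, T > 0, and let the energy family E satisfy (E-a), (E-b), (E-c), and let Ψ_u : V → [0,∞) be lower semicontinuous and convex with Ψ_u(0) = 0. Let r > 0, t ∈ [0,T) with t + r ≤ T, u ∈ D, and w ∈ V* with Ψ_u*(w) < ∞. Then the Moreau–Yosida value Φ_{r,t}(w;u) = inf_{v∈V} ( rΨ_u((v−u)/r) + E_{t+r}(v) − ⟨w,v⟩ ) is a real number (neither +∞ nor −∞), the resolvent set J_{r,t}(w;u) of global minimizers is nonempty, and every minimizer belongs to D. -/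
open MeasureTheory Filter Topology Set
open scoped Classical

noncomputable section

variable {V : Type*} [NormedAddCommGroup V] [NormedSpace ℝ V]

/-- The Legendre–Fenchel transform (convex conjugate) of a real-valued functional,
with values in the extended reals. -/
def conjFn (Ψ : V → ℝ) (ξ : StrongDual ℝ V) : EReal :=
  ⨆ v : V, ((ξ v - Ψ v : ℝ) : EReal)

/-- The convex subdifferential of `Ψ` at `u`. -/
def cSubdiff (Ψ : V → ℝ) (u : V) : Set (StrongDual ℝ V) :=
  {ξ | ∀ v : V, Ψ u + ξ (v - u) ≤ Ψ v}

/-- The Fréchet subdifferential at `u ∈ D` of the functional equal to `E` on `D` and `+∞`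
off `D`:  `ξ ∈ ∂E(u)` iff `liminf_{v→u} (E(v) - E(u) - ⟨ξ,v-u⟩)/‖v-u‖ ≥ 0`, written in the
equivalent form: for all `ε > 0`, eventually near `u`, `E(v) ≥ E(u) + ⟨ξ,v-u⟩ - ε‖v-u‖`
for `v ∈ D` (for `v ∉ D` the functional is `+∞` and the inequality is automatic). -/
def frSubdiff (E : V → ℝ) (D : Set V) (u : V) : Set (StrongDual ℝ V) :=
  {ξ | u ∈ D ∧ ∀ ε > (0:ℝ), ∀ᶠ v in 𝓝 u, v ∈ D → E u + ξ (v - u) - ε * ‖v - u‖ ≤ E v}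

/-- The extension of the energy functional by `+∞` off its effective domain `D`. -/
def Eext (E : V → ℝ) (D : Set V) (v : V) : EReal :=
  if v ∈ D then ((E v : ℝ) : EReal) else ⊤

/-- `G(u) ≤ R` for `G(u) = sup_{t∈[0,T]} E_t(u)` (with `G(u) = +∞` off the domain `D`). -/
def GSublevel (T : ℝ) (E : ℝ → V → ℝ) (D : Set V) (u : V) (R : ℝ) : Prop :=
  u ∈ D ∧ ∀ t ∈ Icc (0:ℝ) T, E t u ≤ R

/-- The functional `Φ(r,t,u,w;·) : v ↦ r Ψ_u((v-u)/r) + E_{t+r}(v) - ⟨w,v⟩`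
(with `E_{t+r} = +∞` off `D`). -/
def PhiFun (T : ℝ) (E : ℝ → V → ℝ) (D : Set V) (Ψ : V → V → ℝ)
    (r t : ℝ) (u : V) (w : StrongDual ℝ V) (v : V) : EReal :=
  ((r * Ψ u (r⁻¹ • (v - u)) - w v : ℝ) : EReal) + Eext (E (t + r)) D v

/-- The Moreau–Yosida regularization `Φ_{r,t}(w;u) = inf_v Φ(r,t,u,w;v)`. -/
def PhiInf (T : ℝ) (E : ℝ → V → ℝ) (D : Set V) (Ψ : V → V → ℝ)
    (r t : ℝ) (u : V) (w : StrongDual ℝ V) : EReal :=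
  ⨅ v : V, PhiFun T E D Ψ r t u w v

/-- The resolvent set `J_{r,t}(w;u)` of global minimizers of `Φ(r,t,u,w;·)`. -/
def resolventJ (T : ℝ) (E : ℝ → V → ℝ) (D : Set V) (Ψ : V → V → ℝ)
    (r t : ℝ) (u : V) (w : StrongDual ℝ V) : Set V :=
  {v : V | PhiFun T E D Ψ r t u w v = PhiInf T E D Ψ r t u w}

/-- **(2.Ea) Constant domain:** each `E_t` is proper and lower semicontinuous with
time-independent effective domain `D`. -/
def AssumpEa (T : ℝ) (E : ℝ → V → ℝ) (D : Set V) : Prop :=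
  D.Nonempty ∧ ∀ t ∈ Icc (0:ℝ) T, LowerSemicontinuous (Eext (E t) D)

/-- **(2.Eb) Compactness of sublevels:** for some `t* ∈ [0,T]`, `E_{t*}` has compact
sublevel sets. -/
def AssumpEb (T : ℝ) (E : ℝ → V → ℝ) (D : Set V) : Prop :=
  ∃ ts ∈ Icc (0:ℝ) T, ∀ R : ℝ, IsCompact {u : V | u ∈ D ∧ E ts u ≤ R}

/-- **(2.Ec) Energetic control of power:** for `u ∈ D`, `t ↦ E_t(u)` is continuous on
`[0,T]`, differentiable on `(0,T)` with derivative `∂ₜE_t(u) = Edot t u` and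
`|∂ₜ E_t(u)| ≤ C E_t(u)`. -/
def AssumpEc (T : ℝ) (E : ℝ → V → ℝ) (D : Set V) (Edot : ℝ → V → ℝ) (C : ℝ) : Prop :=
  0 < C ∧ ∀ u ∈ D, ContinuousOn (fun t => E t u) (Icc (0:ℝ) T) ∧
    (∀ t ∈ Ioo (0:ℝ) T, HasDerivAt (fun s => E s u) (Edot t u) t) ∧
    (∀ t ∈ Ioo (0:ℝ) T, |Edot t u| ≤ C * E t u)

/-- **(2.Ed) Chain rule:** along any absolutely continuous curve `u` with integrable
subdifferential selection `ξ`, bounded energy and finite dissipation integrals, the map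
`t ↦ E_t(u(t))` is absolutely continuous with `(d/dt) E_t(u(t)) ≥ ⟨ξ(t),u'(t)⟩ + ∂ₜE_t(u(t))`
almost everywhere. -/
def AssumpEd (T : ℝ) (E : ℝ → V → ℝ) (D : Set V) (Edot : ℝ → V → ℝ)
    (Ψ : V → V → ℝ) : Prop :=
  ∀ (u u' : ℝ → V) (ξ : ℝ → StrongDual ℝ V),
    IntegrableOn u' (Ioc 0 T) →
    (∀ t ∈ Icc (0:ℝ) T, u t = u 0 + ∫ r in (0:ℝ)..t, u' r) →
    IntegrableOn ξ (Ioc 0 T) →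
    (∃ M : ℝ, ∀ t ∈ Icc (0:ℝ) T, u t ∈ D ∧ |E t (u t)| ≤ M) →
    (∀ᵐ t ∂(volume.restrict (Ioc 0 T)), ξ t ∈ frSubdiff (E t) D (u t)) →
    IntegrableOn (fun t => Ψ (u t) (u' t)) (Ioc 0 T) →
    (∃ P : ℝ → ℝ, IntegrableOn P (Ioc 0 T) ∧
      ∀ᵐ t ∂(volume.restrict (Ioc 0 T)), conjFn (Ψ (u t)) (ξ t) = ((P t : ℝ) : EReal)) →
    ∃ e' : ℝ → ℝ, IntegrableOn e' (Ioc 0 T) ∧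
      (∀ t ∈ Icc (0:ℝ) T, E t (u t) = E 0 (u 0) + ∫ r in (0:ℝ)..t, e' r) ∧
      ∀ᵐ t ∂(volume.restrict (Ioc 0 T)), ξ t (u' t) + Edot t (u t) ≤ e' t

/-- **(2.Ee) Strong-weak closedness** of the graph of `∂E_t` together with convergence of
energy and power. -/
def AssumpEe (T : ℝ) (E : ℝ → V → ℝ) (D : Set V) (Edot : ℝ → V → ℝ) : Prop :=
  ∀ t ∈ Icc (0:ℝ) T, ∀ (un : ℕ → V) (ξn : ℕ → StrongDual ℝ V) (u : V)
    (ξ : StrongDual ℝ V) (𝓔 P : ℝ),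
    (∀ n, ξn n ∈ frSubdiff (E t) D (un n)) →
    Tendsto un atTop (𝓝 u) →
    (∀ v : V, Tendsto (fun n => ξn n v) atTop (𝓝 (ξ v))) →
    Tendsto (fun n => E t (un n)) atTop (𝓝 𝓔) →
    Tendsto (fun n => Edot t (un n)) atTop (𝓝 P) →
    ξ ∈ frSubdiff (E t) D u ∧ E t u = 𝓔 ∧ P ≤ Edot t u

/-- **(2.Ψa) Dissipation potential:** each `Ψ_u : V → [0,∞)` is lower semicontinuous and
convex with `Ψ_u(0) = 0`, and any two elements of `∂Ψ_u(v)` have the same conjugate value. -/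
def AssumpPsiA (Ψ : V → V → ℝ) : Prop :=
  ∀ u : V, LowerSemicontinuous (Ψ u) ∧ ConvexOn ℝ univ (Ψ u) ∧ Ψ u 0 = 0 ∧
    (∀ v : V, 0 ≤ Ψ u v) ∧
    ∀ (v : V) (w₁ w₂ : StrongDual ℝ V),
      w₁ ∈ cSubdiff (Ψ u) v → w₂ ∈ cSubdiff (Ψ u) v →
      conjFn (Ψ u) w₁ = conjFn (Ψ u) w₂

/-- **(2.Ψb) Superlinearity:** `Ψ_u` and `Ψ*_u` are superlinear, uniformly with respect to
`u` in sublevels of `G`. -/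
def AssumpPsiB (T : ℝ) (E : ℝ → V → ℝ) (D : Set V) (Ψ : V → V → ℝ) : Prop :=
  ∀ R > (0:ℝ),
    (∀ Kc : ℝ, ∃ ρ : ℝ, ∀ v : V, ρ ≤ ‖v‖ →
      ∀ u : V, GSublevel T E D u R → Kc * ‖v‖ ≤ Ψ u v) ∧
    (∀ Kc : ℝ, ∃ ρ : ℝ, ∀ ξ : StrongDual ℝ V, ρ ≤ ‖ξ‖ →
      ∀ u : V, GSublevel T E D u R → ((Kc * ‖ξ‖ : ℝ) : EReal) ≤ conjFn (Ψ u) ξ)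

/-- **(2.Ψc) Mosco continuity of the state dependence:** `uₙ → u` strongly with uniformly
bounded energy implies `Ψ_{uₙ}` Mosco-converges to `Ψ_u` (strong and weak liminf estimates
and strong and weak recovery sequences). -/
def AssumpPsiC (T : ℝ) (E : ℝ → V → ℝ) (D : Set V) (Ψ : V → V → ℝ) : Prop :=
  ∀ (R : ℝ) (un : ℕ → V) (u : V), Tendsto un atTop (𝓝 u) →
    (∀ n, GSublevel T E D (un n) R) →
    ((∀ (v : V) (vn : ℕ → V), Tendsto vn atTop (𝓝 v) →
        ((Ψ u v : ℝ) : EReal) ≤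
          Filter.liminf (fun n => ((Ψ (un n) (vn n) : ℝ) : EReal)) atTop)
     ∧ (∀ v : V, ∃ vn : ℕ → V, Tendsto vn atTop (𝓝 v) ∧
          Tendsto (fun n => Ψ (un n) (vn n)) atTop (𝓝 (Ψ u v)))
     ∧ (∀ (v : V) (vn : ℕ → V),
          (∀ ζ : StrongDual ℝ V, Tendsto (fun n => ζ (vn n)) atTop (𝓝 (ζ v))) →
          ((Ψ u v : ℝ) : EReal) ≤
            Filter.liminf (fun n => ((Ψ (un n) (vn n) : ℝ) : EReal)) atTop)
     ∧ (∀ v : V, ∃ vn : ℕ → V,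
          (∀ ζ : StrongDual ℝ V, Tendsto (fun n => ζ (vn n)) atTop (𝓝 (ζ v))) ∧
          Tendsto (fun n => Ψ (un n) (vn n)) atTop (𝓝 (Ψ u v))))

/-- **(2.Ba) Continuity of the perturbation** on sublevels of `G`. -/
def AssumpBa (T : ℝ) (E : ℝ → V → ℝ) (D : Set V)
    (B : ℝ → V → StrongDual ℝ V) : Prop :=
  ∀ (tn : ℕ → ℝ) (un : ℕ → V) (t : ℝ) (u : V) (R : ℝ),
    (∀ n, tn n ∈ Icc (0:ℝ) T) → t ∈ Icc (0:ℝ) T →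
    Tendsto tn atTop (𝓝 t) → Tendsto un atTop (𝓝 u) →
    (∀ n, GSublevel T E D (un n) R) →
    Tendsto (fun n => B (tn n) (un n)) atTop (𝓝 (B t u))

/-- **(2.Bb) Control of `B` by the energy:** there are `β > 0` and `c ∈ (0,1)` with
`c Ψ*_u(B(t,u)/c) ≤ β(1 + E_t(u))`. -/
def AssumpBb (T : ℝ) (E : ℝ → V → ℝ) (D : Set V) (Ψ : V → V → ℝ)
    (B : ℝ → V → StrongDual ℝ V) : Prop :=
  ∃ β > (0:ℝ), ∃ c : ℝ, 0 < c ∧ c < 1 ∧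
    ∀ u ∈ D, ∀ t ∈ Icc (0:ℝ) T,
      (c : EReal) * conjFn (Ψ u) (c⁻¹ • B t u) ≤ ((β * (1 + E t u) : ℝ) : EReal)

private lemma nonneg_Icc_of_nonneg_Ioo (T : ℝ) (hT : 0 < T) (f : ℝ → ℝ)
    (hcont : ContinuousOn f (Icc 0 T)) (hpos : ∀ s ∈ Ioo (0:ℝ) T, 0 ≤ f s) :
    ∀ s ∈ Icc (0:ℝ) T, 0 ≤ f s := by
  intro s hs
  have hcl : s ∈ closure (Ioo (0:ℝ) T) := by rwa [closure_Ioo hT.ne]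
  have hne : (𝓝[Ioo (0:ℝ) T] s).NeBot := mem_closure_iff_nhdsWithin_neBot.mp hcl
  have htend : Tendsto f (𝓝[Ioo (0:ℝ) T] s) (𝓝 (f s)) :=
    (hcont s hs).mono Ioo_subset_Icc_self
  exact ge_of_tendsto htend (eventually_mem_nhdsWithin.mono fun x hx => hpos x hx)

private lemma gronwall_cmp (T : ℝ) (hT : 0 < T) (C : ℝ) (hC : 0 < C) (f f' : ℝ → ℝ)
    (hcont : ContinuousOn f (Icc 0 T))
    (hderiv : ∀ s ∈ Ioo (0:ℝ) T, HasDerivAt f (f' s) s)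
    (hbound : ∀ s ∈ Ioo (0:ℝ) T, |f' s| ≤ C * f s) :
    ∀ s₁ ∈ Icc (0:ℝ) T, ∀ s₂ ∈ Icc (0:ℝ) T, f s₁ ≤ f s₂ * Real.exp (C * T) := by
  have hpos : ∀ s ∈ Ioo (0:ℝ) T, 0 ≤ f s := by
    intro s hs
    by_contra hneg
    push_neg at hneg
    nlinarith [hbound s hs, abs_nonneg (f' s), mul_pos hC (neg_pos.mpr hneg)]
  have hnn := nonneg_Icc_of_nonneg_Ioo T hT f hcont hpos
  have hexp : ∀ c : ℝ, Continuous fun s : ℝ => Real.exp (c * s) :=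
    fun c => Real.continuous_exp.comp (continuous_const.mul continuous_id)
  have hdh : ∀ c : ℝ, ∀ s ∈ Ioo (0:ℝ) T,
      HasDerivAt (fun s => f s * Real.exp (c * s))
        (f' s * Real.exp (c * s) + f s * (Real.exp (c * s) * (c * 1))) s := by
    intro c s hs
    exact (hderiv s hs).mul ((Real.hasDerivAt_exp (c * s)).comp s ((hasDerivAt_id s).const_mul c))
  have hmono : MonotoneOn (fun s => f s * Real.exp (C * s)) (Icc 0 T) := by
    apply monotoneOn_of_deriv_nonneg (convex_Icc 0 T) (hcont.mul (hexp C).continuousOn)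
    · rw [interior_Icc]
      exact fun x hx => ((hdh C x hx).differentiableAt).differentiableWithinAt
    · rw [interior_Icc]
      intro x hx
      change 0 ≤ deriv (fun s => f s * Real.exp (C * s)) x
      rw [(hdh C x hx).deriv]
      have h1 := hbound x hx
      have h2 := neg_abs_le (f' x)
      have key : 0 ≤ (f' x + C * f x) * Real.exp (C * x) :=
        mul_nonneg (by linarith) (Real.exp_pos _).le
      nlinarith [key]
  have hanti : AntitoneOn (fun s => f s * Real.exp (-C * s)) (Icc 0 T) := by
    apply antitoneOn_of_deriv_nonpos (convex_Icc 0 T) (hcont.mul (hexp (-C)).continuousOn)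
    · rw [interior_Icc]
      exact fun x hx => ((hdh (-C) x hx).differentiableAt).differentiableWithinAt
    · rw [interior_Icc]
      intro x hx
      change deriv (fun s => f s * Real.exp (-C * s)) x ≤ 0
      rw [(hdh (-C) x hx).deriv]
      have h1 := hbound x hx
      have h2 := le_abs_self (f' x)
      have key : (f' x - C * f x) * Real.exp (-C * x) ≤ 0 :=
        mul_nonpos_of_nonpos_of_nonneg (by linarith) (Real.exp_pos _).le
      nlinarith [key]
  intro s₁ hs₁ s₂ hs₂
  rcases le_total s₁ s₂ with h | h
  · have h1 := hmono hs₁ hs₂ h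
    have h2 : Real.exp (C * s₂) ≤ Real.exp (C * s₁) * Real.exp (C * T) := by
      rw [← Real.exp_add]
      apply Real.exp_le_exp.mpr
      nlinarith [hs₁.1, hs₂.2, hs₁.2]
    have h3 : f s₂ * Real.exp (C * s₂) ≤ f s₂ * Real.exp (C * T) * Real.exp (C * s₁) :=
      (mul_le_mul_of_nonneg_left h2 (hnn s₂ hs₂)).trans_eq (by ring)
    exact le_of_mul_le_mul_right (h1.trans h3) (Real.exp_pos (C * s₁))
  · have h1 := hanti hs₂ hs₁ h
    have h2 : Real.exp (-C * s₂) ≤ Real.exp (C * T) * Real.exp (-C * s₁) := by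
      rw [← Real.exp_add]
      apply Real.exp_le_exp.mpr
      nlinarith [hs₂.1, hs₁.2, hs₂.2]
    have h3 : f s₂ * Real.exp (-C * s₂) ≤ f s₂ * Real.exp (C * T) * Real.exp (-C * s₁) :=
      (mul_le_mul_of_nonneg_left h2 (hnn s₂ hs₂)).trans_eq (by ring)
    exact le_of_mul_le_mul_right (h1.trans h3) (Real.exp_pos (-C * s₁))

private lemma lsc_const_mul {g : V → ℝ} (hg : LowerSemicontinuous g) {c : ℝ} (hc : 0 < c) :
    LowerSemicontinuous fun x => c * g x := by
  intro x y hy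
  have h1 : y / c < g x := (div_lt_iff₀' hc).mpr hy
  exact (hg x _ h1).mono fun z hz => (div_lt_iff₀' hc).mp hz

/-- **Lemma 2.3 (Existence of minimizers / nonempty resolvent).** Under (2.Ea)–(2.Ec) and the
basic dissipation-potential assumptions, for `u ∈ D` and `w ∈ V*` with `Ψ*_u(w) < ∞`, the
Moreau–Yosida value `Φ_{r,t}(w;u)` is a real number, the resolvent set `J_{r,t}(w;u)` is
nonempty, and every minimizer belongs to `D`. -/
theorem resolvent_nonempty
    (T : ℝ) (hT : 0 < T)
    (E : ℝ → V → ℝ) (D : Set V) (Edot : ℝ → V → ℝ) (C : ℝ) (Ψ : V → V → ℝ)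
    (hEa : AssumpEa T E D) (hEb : AssumpEb T E D) (hEc : AssumpEc T E D Edot C)
    (hΨ : ∀ u : V, LowerSemicontinuous (Ψ u) ∧ ConvexOn ℝ univ (Ψ u) ∧ Ψ u 0 = 0 ∧
      ∀ v : V, 0 ≤ Ψ u v)
    (r t : ℝ) (hr : 0 < r) (ht : t ∈ Ico (0:ℝ) T) (htr : t + r ≤ T)
    (u : V) (hu : u ∈ D) (w : StrongDual ℝ V)
    (hw : conjFn (Ψ u) w ≠ ⊤) :
    (∃ m : ℝ, PhiInf T E D Ψ r t u w = ((m : ℝ) : EReal))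
    ∧ (resolventJ T E D Ψ r t u w).Nonempty
    ∧ ∀ v ∈ resolventJ T E D Ψ r t u w, v ∈ D := by
  obtain ⟨hC, hEcc⟩ := hEc
  obtain ⟨hDne, hlscE⟩ := hEa
  obtain ⟨ts, hts, hKcpt⟩ := hEb
  have htrmem : t + r ∈ Icc (0:ℝ) T := ⟨by linarith [ht.1], htr⟩
  -- energy nonnegativity and two-time comparison
  have hEnn : ∀ x ∈ D, ∀ s ∈ Icc (0:ℝ) T, 0 ≤ E s x := by
    intro x hx
    obtain ⟨hcont, hderiv, hbound⟩ := hEcc x hx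
    apply nonneg_Icc_of_nonneg_Ioo T hT _ hcont
    intro s hs
    by_contra hneg
    push_neg at hneg
    nlinarith [hbound s hs, abs_nonneg (Edot s x), mul_pos hC (neg_pos.mpr hneg)]
  have hEcmp : ∀ x ∈ D, ∀ s₁ ∈ Icc (0:ℝ) T, ∀ s₂ ∈ Icc (0:ℝ) T,
      E s₁ x ≤ E s₂ x * Real.exp (C * T) := by
    intro x hx
    obtain ⟨hcont, hderiv, hbound⟩ := hEcc x hx
    exact gronwall_cmp T hT C hC _ _ hcont hderiv hbound
  -- the conjugate value S
  have hwne : conjFn (Ψ u) w ≠ ⊥ := by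
    have h0 : ((w 0 - Ψ u 0 : ℝ) : EReal) ≤ conjFn (Ψ u) w :=
      le_iSup (fun x : V => ((w x - Ψ u x : ℝ) : EReal)) 0
    intro h
    rw [h] at h0
    exact (EReal.coe_ne_bot _) (le_bot_iff.mp h0)
  obtain ⟨S, hSeq⟩ : ∃ S : ℝ, conjFn (Ψ u) w = (S : EReal) :=
    ⟨_, (EReal.coe_toReal hw hwne).symm⟩
  have hS : ∀ x : V, w x - Ψ u x ≤ S := by
    intro x
    have h1 : ((w x - Ψ u x : ℝ) : EReal) ≤ conjFn (Ψ u) w :=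
      le_iSup (fun x : V => ((w x - Ψ u x : ℝ) : EReal)) x
    rw [hSeq] at h1
    exact_mod_cast h1
  -- lower bound for the dissipation part
  have hflb : ∀ x : V, -(w u) - r * S ≤ r * Ψ u (r⁻¹ • (x - u)) - w x := by
    intro x
    have h1 := hS (r⁻¹ • (x - u))
    have h2 : w (r⁻¹ • (x - u)) = r⁻¹ * (w x - w u) := by
      rw [_root_.map_smul, map_sub, smul_eq_mul]
    rw [h2] at h1
    have h3 : r * (r⁻¹ * (w x - w u) - S) ≤ r * Ψ u (r⁻¹ • (x - u)) :=
      mul_le_mul_of_nonneg_left (by linarith) hr.le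
    have h4 : r * (r⁻¹ * (w x - w u) - S) = (w x - w u) - r * S := by
      field_simp
    linarith [h3, h4.symm.le, h4.le]
  obtain ⟨m0, hm0⟩ : ∃ m0 : ℝ, ∀ x : V, m0 ≤ r * Ψ u (r⁻¹ • (x - u)) - w x := ⟨_, hflb⟩
  -- PhiFun on / off D
  have hPhiD : ∀ x ∈ D, PhiFun T E D Ψ r t u w x
      = (((r * Ψ u (r⁻¹ • (x - u)) - w x) + E (t + r) x : ℝ) : EReal) := by
    intro x hx
    simp only [PhiFun, Eext, if_pos hx, ← EReal.coe_add]
  have hPhiTop : ∀ x : V, x ∉ D → PhiFun T E D Ψ r t u w x = ⊤ := by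
    intro x hx
    simp only [PhiFun, Eext, if_neg hx]
    exact EReal.coe_add_top _
  -- uniform lower bound for PhiFun
  have hlb : ∀ x : V, ((m0 : ℝ) : EReal) ≤ PhiFun T E D Ψ r t u w x := by
    intro x
    by_cases hx : x ∈ D
    · rw [hPhiD x hx]
      have := hEnn x hx (t + r) htrmem
      exact_mod_cast (by linarith [hm0 x] :
        m0 ≤ (r * Ψ u (r⁻¹ • (x - u)) - w x) + E (t + r) x)
    · rw [hPhiTop x hx]; exact le_top
  -- PhiInf is a real number
  have hinf_le : PhiInf T E D Ψ r t u w ≤ PhiFun T E D Ψ r t u w u := iInf_le _ u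
  have hub : PhiFun T E D Ψ r t u w u ≠ ⊤ := by
    rw [hPhiD u hu]; exact EReal.coe_ne_top _
  have hinf_netop : PhiInf T E D Ψ r t u w ≠ ⊤ := ne_top_of_le_ne_top hub hinf_le
  have hinf_ge : ((m0 : ℝ) : EReal) ≤ PhiInf T E D Ψ r t u w := le_iInf hlb
  have hinf_nebot : PhiInf T E D Ψ r t u w ≠ ⊥ := by
    intro h
    rw [h, le_bot_iff] at hinf_ge
    exact (EReal.coe_ne_bot _) hinf_ge
  obtain ⟨m, hm⟩ : ∃ m : ℝ, PhiInf T E D Ψ r t u w = (m : EReal) :=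
    ⟨_, (EReal.coe_toReal hinf_netop hinf_nebot).symm⟩
  refine ⟨⟨m, hm⟩, ?_, ?_⟩
  · -- existence of a minimizer
    have hmin : ∀ n : ℕ, ∃ x : V,
        PhiFun T E D Ψ r t u w x < ((m + 1 / ((n : ℝ) + 1) : ℝ) : EReal) := by
      intro n
      have h1 : PhiInf T E D Ψ r t u w < ((m + 1 / ((n : ℝ) + 1) : ℝ) : EReal) := by
        rw [hm]
        have h0 : (0:ℝ) < 1 / ((n : ℝ) + 1) := by positivity
        exact_mod_cast (by linarith : m < m + 1 / ((n : ℝ) + 1))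
      unfold PhiInf at h1
      exact iInf_lt_iff.mp h1
    choose v hvlt using hmin
    have hvD : ∀ n, v n ∈ D := by
      intro n
      by_contra h
      have h1 := hvlt n
      rw [hPhiTop _ h] at h1
      exact not_top_lt h1
    obtain ⟨a, ha⟩ : ∃ a : ℕ → ℝ, ∀ n, a n = r * Ψ u (r⁻¹ • (v n - u)) - w (v n) :=
      ⟨_, fun n => rfl⟩
    obtain ⟨b, hbeq⟩ : ∃ b : ℕ → ℝ, ∀ n, b n = E (t + r) (v n) := ⟨_, fun n => rfl⟩
    have hab_lt : ∀ n, a n + b n < m + 1 / ((n : ℝ) + 1) := by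
      intro n
      have h1 := hvlt n
      rw [hPhiD _ (hvD n)] at h1
      rw [ha n, hbeq n]
      exact_mod_cast h1
    have hab_ge : ∀ n, m ≤ a n + b n := by
      intro n
      have h1 : PhiInf T E D Ψ r t u w ≤ PhiFun T E D Ψ r t u w (v n) := iInf_le _ _
      rw [hm, hPhiD _ (hvD n)] at h1
      rw [ha n, hbeq n]
      exact_mod_cast h1
    have ha_lb : ∀ n, m0 ≤ a n := fun n => (ha n) ▸ hm0 (v n)
    have hb_nn : ∀ n, 0 ≤ b n := fun n => (hbeq n) ▸ hEnn _ (hvD n) _ htrmem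
    obtain ⟨R, hR⟩ : ∃ R : ℝ, R = m + 1 - m0 := ⟨_, rfl⟩
    have hb_ub : ∀ n, b n ≤ R := by
      intro n
      have h1 := hab_lt n
      have h2 := ha_lb n
      have h3 : 1 / ((n : ℝ) + 1) ≤ 1 := by
        rw [div_le_one (by positivity : (0:ℝ) < (n : ℝ) + 1)]
        linarith [Nat.cast_nonneg (α := ℝ) n]
      rw [hR]
      linarith
    have hvK : ∀ n, v n ∈ {x : V | x ∈ D ∧ E ts x ≤ R * Real.exp (C * T)} := by
      intro n
      refine ⟨hvD n, ?_⟩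
      have h1 := hEcmp (v n) (hvD n) ts hts (t + r) htrmem
      have h2 : E (t + r) (v n) * Real.exp (C * T) ≤ R * Real.exp (C * T) :=
        mul_le_mul_of_nonneg_right ((hbeq n) ▸ hb_ub n) (Real.exp_pos _).le
      exact h1.trans h2
    obtain ⟨xb, hxbK, φ, hφ, hvφ⟩ := (hKcpt (R * Real.exp (C * T))).tendsto_subseq hvK
    obtain ⟨bb, hbbmem, ψ, hψ, hbψ⟩ :=
      (isCompact_Icc (a := (0:ℝ)) (b := R)).tendsto_subseq
        (x := fun k => b (φ k)) (fun k => ⟨hb_nn _, hb_ub _⟩)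
    set σ : ℕ → ℕ := φ ∘ ψ with hσdef
    have hσ : StrictMono σ := hφ.comp hψ
    have hσat : Tendsto σ atTop atTop := hσ.tendsto_atTop
    have hvσ : Tendsto (fun k => v (σ k)) atTop (𝓝 xb) := hvφ.comp hψ.tendsto_atTop
    have hbσ : Tendsto (fun k => b (σ k)) atTop (𝓝 bb) := hbψ
    have h_sum : Tendsto (fun k => a (σ k) + b (σ k)) atTop (𝓝 m) := by
      have hup : Tendsto (fun k => m + 1 / ((σ k : ℝ) + 1)) atTop (𝓝 m) := by
        have h0 : Tendsto (fun n : ℕ => m + 1 / ((n : ℝ) + 1)) atTop (𝓝 (m + 0)) :=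
          tendsto_const_nhds.add tendsto_one_div_add_atTop_nhds_zero_nat
        simpa [Function.comp_def] using h0.comp hσat
      exact tendsto_of_tendsto_of_tendsto_of_le_of_le tendsto_const_nhds hup
        (fun k => hab_ge (σ k)) (fun k => (hab_lt (σ k)).le)
    have h_a : Tendsto (fun k => a (σ k)) atTop (𝓝 (m - bb)) := by
      have := h_sum.sub hbσ
      simpa using this
    -- lower semicontinuity of the dissipation part
    have hlscΨ : LowerSemicontinuous fun x : V => Ψ u (r⁻¹ • (x - u)) :=
      LowerSemicontinuous.comp (hΨ u).1 ((continuous_id.sub continuous_const).const_smul r⁻¹)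
    have hlscrΨ : LowerSemicontinuous fun x : V => r * Ψ u (r⁻¹ • (x - u)) :=
      lsc_const_mul hlscΨ hr
    have hlscF : LowerSemicontinuous fun x : V => r * Ψ u (r⁻¹ • (x - u)) - w x := by
      have h1 : LowerSemicontinuous fun x : V => -(w x) :=
        (w.continuous.neg).lowerSemicontinuous
      have := hlscrΨ.add h1
      simpa [sub_eq_add_neg] using this
    have hFxb : r * Ψ u (r⁻¹ • (xb - u)) - w xb ≤ m - bb := by
      by_contra hcon
      push_neg at hcon
      obtain ⟨y, hy1, hy2⟩ := exists_between hcon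
      have hev : ∀ᶠ z in 𝓝 xb, y < r * Ψ u (r⁻¹ • (z - u)) - w z := hlscF xb y hy2
      have hev2 : ∀ᶠ k in atTop, y ≤ a (σ k) :=
        (hvσ.eventually hev).mono fun k hk => (ha (σ k)) ▸ hk.le
      have : y ≤ m - bb := ge_of_tendsto h_a hev2
      linarith
    have hxbD : xb ∈ D := hxbK.1
    have hExb : E (t + r) xb ≤ bb := by
      by_contra hcon
      push_neg at hcon
      obtain ⟨ε, hεpos, hεlt⟩ : ∃ ε : ℝ, 0 < ε ∧ bb + ε < E (t + r) xb :=
        ⟨(E (t + r) xb - bb) / 2, by linarith, by linarith⟩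
      have hclosed : IsClosed {x : V | Eext (E (t + r)) D x ≤ ((bb + ε : ℝ) : EReal)} :=
        (hlscE (t + r) htrmem).isClosed_preimage _
      have hmem : ∀ᶠ k in atTop,
          v (σ k) ∈ {x : V | Eext (E (t + r)) D x ≤ ((bb + ε : ℝ) : EReal)} := by
        have h1 : ∀ᶠ k in atTop, b (σ k) < bb + ε :=
          hbσ.eventually_lt_const (by linarith)
        refine h1.mono fun k hk => ?_
        rw [hbeq (σ k)] at hk
        rw [mem_setOf_eq, Eext, if_pos (hvD (σ k))]
        exact_mod_cast hk.le
      have hxmem := hclosed.mem_of_tendsto hvσ hmem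
      rw [mem_setOf_eq, Eext, if_pos hxbD] at hxmem
      have : E (t + r) xb ≤ bb + ε := by exact_mod_cast hxmem
      linarith
    have hPhixb : PhiFun T E D Ψ r t u w xb ≤ (m : EReal) := by
      rw [hPhiD xb hxbD]
      exact_mod_cast (by linarith [hFxb, hExb] :
        (r * Ψ u (r⁻¹ • (xb - u)) - w xb) + E (t + r) xb ≤ m)
    refine ⟨xb, ?_⟩
    have hgoal : PhiFun T E D Ψ r t u w xb = PhiInf T E D Ψ r t u w :=
      le_antisymm (by rw [hm]; exact hPhixb) (iInf_le _ _)
    exact hgoal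
  · -- every minimizer lies in D
    intro x hx
    by_contra hxD
    have h1 : PhiFun T E D Ψ r t u w x = PhiInf T E D Ψ r t u w := hx
    rw [hPhiTop x hxD, hm] at h1
    exact (EReal.coe_ne_top m) h1.symm
end
end

section
/- (Energy estimate for minimizers) Let V be a real Banach space, T > 0, let the energy family E satisfy (E-a), (E-b), (E-c) (with constant C), and let Ψ_u : V → [0,∞) be lower semicontinuous and convex with Ψ_u(0) = 0. Let t ∈ [0,T), r ∈ (0, T−t], u ∈ D, and w ∈ V* with Ψ_u*(w) < ∞. Then every minimizer u_r ∈ J_{r,t}(w;u) satisfies E_{t+r}(u_r) ≤ E_{t+r}(u) + r·Ψ_u*(w), and consequently G(u_r) ≤ e^{CT}·( G(u) + r·Ψ_u*(w) ), where G(v) = sup_{s∈[0,T]} E_s(v). -/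
open MeasureTheory Filter Topology Set
open scoped Classical

noncomputable section

variable {V : Type*} [NormedAddCommGroup V] [NormedSpace ℝ V]

/-- **Energy estimate for minimizers** (part of Lemma 2.4, estimate (2.15)).
Every minimizer `u_r ∈ J_{r,t}(w;u)` satisfies `E_{t+r}(u_r) ≤ E_{t+r}(u) + r Ψ*_u(w)` and
consequently `G(u_r) ≤ e^{CT} (G(u) + r Ψ*_u(w))`, expressed here for any upper bound `R`
of `G(u)` and with `p` the (finite) value of `Ψ*_u(w)`. -/
theorem minimizer_energy_estimate
    (T : ℝ) (hT : 0 < T)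
    (E : ℝ → V → ℝ) (D : Set V) (Edot : ℝ → V → ℝ) (C : ℝ) (Ψ : V → V → ℝ)
    (hEa : AssumpEa T E D) (hEb : AssumpEb T E D) (hEc : AssumpEc T E D Edot C)
    (hΨ : ∀ u : V, LowerSemicontinuous (Ψ u) ∧ ConvexOn ℝ univ (Ψ u) ∧ Ψ u 0 = 0 ∧
      ∀ v : V, 0 ≤ Ψ u v)
    (t : ℝ) (ht : t ∈ Ico (0:ℝ) T) (r : ℝ) (hr : r ∈ Ioc 0 (T - t))
    (u : V) (hu : u ∈ D) (w : StrongDual ℝ V)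
    (p : ℝ) (hp : conjFn (Ψ u) w = ((p : ℝ) : EReal))
    (ur : V) (hur : ur ∈ resolventJ T E D Ψ r t u w) :
    ur ∈ D ∧ E (t + r) ur ≤ E (t + r) u + r * p ∧
    ∀ R : ℝ, (∀ s ∈ Icc (0:ℝ) T, E s u ≤ R) →
      ∀ s ∈ Icc (0:ℝ) T, E s ur ≤ Real.exp (C * T) * (R + r * p) := by
  obtain ⟨hr0, hrT⟩ := hr
  obtain ⟨ht0, htT⟩ := ht
  obtain ⟨hC, hEc'⟩ := hEc
  have hΨu0 : Ψ u 0 = 0 := (hΨ u).2.2.1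
  -- conjugate bound
  have hconj : ∀ v : V, w v - Ψ u v ≤ p := by
    intro v
    have h := le_iSup (fun v : V => ((w v - Ψ u v : ℝ) : EReal)) v
    rw [show (⨆ v : V, ((w v - Ψ u v : ℝ) : EReal)) = conjFn (Ψ u) w from rfl, hp] at h
    exact_mod_cast h
  have hp0 : 0 ≤ p := by have := hconj 0; simp [hΨu0] at this; linarith
  -- minimizer inequality
  have hle : PhiFun T E D Ψ r t u w ur ≤ PhiFun T E D Ψ r t u w u := by
    rw [hur]; exact iInf_le _ u
  have hPhiU : PhiFun T E D Ψ r t u w u = (((- w u + E (t + r) u : ℝ)) : EReal) := by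
    simp [PhiFun, Eext, hu, hΨu0]
  have hurD : ur ∈ D := by
    by_contra h
    rw [hPhiU] at hle
    unfold PhiFun at hle
    rw [show Eext (E (t + r)) D ur = ⊤ from if_neg h, EReal.coe_add_top] at hle
    exact EReal.coe_ne_top _ (top_le_iff.mp hle)
  set z := r⁻¹ • (ur - u) with hz
  have hPhiUr : PhiFun T E D Ψ r t u w ur
      = (((r * Ψ u z - w ur + E (t + r) ur : ℝ)) : EReal) := by
    simp [PhiFun, Eext, hurD, hz]
  have key : r * Ψ u z - w ur + E (t + r) ur ≤ - w u + E (t + r) u := by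
    rw [hPhiUr, hPhiU] at hle
    exact_mod_cast hle
  have hzz : ur - u = r • z := by
    rw [hz, smul_inv_smul₀ (ne_of_gt hr0)]
  have hwz : w ur - w u = r * w z := by
    have : w (ur - u) = w (r • z) := by rw [hzz]
    simpa [map_sub, _root_.map_smul, smul_eq_mul] using this
  have hEineq : E (t + r) ur ≤ E (t + r) u + r * p := by
    have h1 : r * (w z - Ψ u z) ≤ r * p :=
      mul_le_mul_of_nonneg_left (hconj z) hr0.le
    nlinarith [key, hwz]
  refine ⟨hurD, hEineq, ?_⟩
  -- Gronwall part
  intro R hR s hs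
  obtain ⟨hcont, hderiv, hbound⟩ := hEc' ur hurD
  set f : ℝ → ℝ := fun s => E s ur with hf
  have hnn0 : ∀ x ∈ Ioo (0:ℝ) T, 0 ≤ f x := by
    intro x hx
    have h1 := hbound x hx
    have h2 := abs_nonneg (Edot x ur)
    nlinarith
  have hnn : ∀ x ∈ Icc (0:ℝ) T, 0 ≤ f x := by
    intro x hx
    have hcl : x ∈ closure (Ioo (0:ℝ) T) := by
      rw [closure_Ioo hT.ne]; exact hx
    have hne : (𝓝[Ioo (0:ℝ) T] x).NeBot := mem_closure_iff_nhdsWithin_neBot.mp hcl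
    have htend : Tendsto f (𝓝[Ioo (0:ℝ) T] x) (𝓝 (f x)) :=
      (hcont x hx).mono Ioo_subset_Icc_self
    exact ge_of_tendsto htend (eventually_mem_nhdsWithin.mono hnn0)
  have hintIcc : interior (Icc (0:ℝ) T) = Ioo 0 T := interior_Icc
  -- monotone function f s * exp (C s)
  have hmono : MonotoneOn (fun x => f x * Real.exp (C * x)) (Icc 0 T) := by
    apply monotoneOn_of_hasDerivWithinAt_nonneg (convex_Icc 0 T)
      (f' := fun x => Edot x ur * Real.exp (C * x) + f x * (C * Real.exp (C * x)))
    · exact hcont.mul (Real.continuous_exp.comp (continuous_const.mul continuous_id)).continuousOn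
    · intro x hx
      rw [hintIcc] at hx
      have h1 : HasDerivAt f (Edot x ur) x := hderiv x hx
      have h2 : HasDerivAt (fun y => Real.exp (C * y)) (C * Real.exp (C * x)) x := by
        simpa [Function.comp_def, mul_comm] using (Real.hasDerivAt_exp (C * x)).comp x ((hasDerivAt_id x).const_mul C)
      exact ((h1.mul h2).hasDerivWithinAt)
    · intro x hx
      rw [hintIcc] at hx
      have h1 := hbound x hx
      have h2 := abs_le.mp h1
      have h3 := Real.exp_pos (C * x)
      nlinarith [h2.1, hnn0 x hx]
  -- antitone function f s * exp (-C s)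
  have hanti : AntitoneOn (fun x => f x * Real.exp (-C * x)) (Icc 0 T) := by
    apply antitoneOn_of_hasDerivWithinAt_nonpos (convex_Icc 0 T)
      (f' := fun x => Edot x ur * Real.exp (-C * x) + f x * (-C * Real.exp (-C * x)))
    · exact hcont.mul (Real.continuous_exp.comp (continuous_const.mul continuous_id)).continuousOn
    · intro x hx
      rw [hintIcc] at hx
      have h1 : HasDerivAt f (Edot x ur) x := hderiv x hx
      have h2 : HasDerivAt (fun y => Real.exp (-C * y)) (-C * Real.exp (-C * x)) x := by
        simpa [Function.comp_def, mul_comm] using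
          (Real.hasDerivAt_exp (-C * x)).comp x ((hasDerivAt_id x).const_mul (-C))
      exact ((h1.mul h2).hasDerivWithinAt)
    · intro x hx
      rw [hintIcc] at hx
      have h1 := hbound x hx
      have h2 := abs_le.mp h1
      have h3 := Real.exp_pos (-C * x)
      nlinarith [h2.2, hnn0 x hx]
  set τ : ℝ := t + r with hτ
  have hτmem : τ ∈ Icc (0:ℝ) T := ⟨by linarith, by linarith⟩
  have hfτ : f τ ≤ R + r * p := le_trans hEineq (by
    have := hR τ hτmem; linarith)
  have hfτ0 : 0 ≤ f τ := hnn τ hτmem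
  have hRrp : 0 ≤ R + r * p := le_trans hfτ0 hfτ
  have hexppos : (0:ℝ) < Real.exp (C * T) := Real.exp_pos _
  rcases le_total s τ with hsτ | hsτ
  · have h1 := hmono hs hτmem hsτ
    have h2 : Real.exp (C * τ) ≤ Real.exp (C * s) * Real.exp (C * T) := by
      rw [← Real.exp_add]
      apply Real.exp_le_exp.mpr
      have : τ - s ≤ T := by
        rcases hs with ⟨hs0, _⟩; rcases hτmem with ⟨_, hτT⟩; linarith
      nlinarith [hC.le]
    have h3 : f τ * Real.exp (C * τ) ≤ (R + r * p) * (Real.exp (C * s) * Real.exp (C * T)) := by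
      calc f τ * Real.exp (C * τ) ≤ (R + r * p) * Real.exp (C * τ) :=
            mul_le_mul_of_nonneg_right hfτ (Real.exp_pos _).le
        _ ≤ (R + r * p) * (Real.exp (C * s) * Real.exp (C * T)) :=
            mul_le_mul_of_nonneg_left h2 hRrp
    have h4 : f s * Real.exp (C * s) ≤ Real.exp (C * T) * (R + r * p) * Real.exp (C * s) := by
      calc f s * Real.exp (C * s) ≤ f τ * Real.exp (C * τ) := h1
        _ ≤ (R + r * p) * (Real.exp (C * s) * Real.exp (C * T)) := h3
        _ = Real.exp (C * T) * (R + r * p) * Real.exp (C * s) := by ring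
    exact le_of_mul_le_mul_right h4 (Real.exp_pos _)
  · have h1 := hanti hτmem hs hsτ
    have h2 : Real.exp (-C * τ) ≤ Real.exp (-C * s) * Real.exp (C * T) := by
      rw [← Real.exp_add]
      apply Real.exp_le_exp.mpr
      have : s - τ ≤ T := by
        rcases hs with ⟨_, hsT⟩; rcases hτmem with ⟨hτ0, _⟩; linarith
      nlinarith [hC.le]
    have h3 : f τ * Real.exp (-C * τ) ≤ (R + r * p) * (Real.exp (-C * s) * Real.exp (C * T)) := by
      calc f τ * Real.exp (-C * τ) ≤ (R + r * p) * Real.exp (-C * τ) :=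
            mul_le_mul_of_nonneg_right hfτ (Real.exp_pos _).le
        _ ≤ (R + r * p) * (Real.exp (-C * s) * Real.exp (C * T)) :=
            mul_le_mul_of_nonneg_left h2 hRrp
    have h4 : f s * Real.exp (-C * s) ≤ Real.exp (C * T) * (R + r * p) * Real.exp (-C * s) := by
      calc f s * Real.exp (-C * s) ≤ f τ * Real.exp (-C * τ) := h1
        _ ≤ (R + r * p) * (Real.exp (-C * s) * Real.exp (C * T)) := h3
        _ = Real.exp (C * T) * (R + r * p) * Real.exp (-C * s) := by ring
    exact le_of_mul_le_mul_right h4 (Real.exp_pos _)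
end
end

section
/- (Convergence of the Moreau–Yosida regularization) Let V be a real Banach space, T > 0, let the energy family E satisfy (E-a), (E-b), (E-c), and let the dissipation potentials Ψ satisfy (Ψ-a) and (Ψ-b). Then for all t ∈ [0,T), u ∈ D and w ∈ V*: lim_{r→0⁺} sup_{u_r ∈ J_{r,t}(w;u)} ‖u_r − u‖ = 0 and lim_{r→0⁺} Φ_{r,t}(w;u) = E_t(u) − ⟨w,u⟩. -/
open MeasureTheory Filter Topology Set
open scoped Classical

noncomputable section

variable {V : Type*} [NormedAddCommGroup V] [NormedSpace ℝ V]

set_option maxHeartbeats 1000000 in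
private lemma aux_E_nonneg {V : Type*} [NormedAddCommGroup V] [NormedSpace ℝ V]
    (T : ℝ) (hT : 0 < T) (E : ℝ → V → ℝ) (D : Set V)
    (Edot : ℝ → V → ℝ) (C : ℝ) (hEc : AssumpEc T E D Edot C)
    {v : V} (hv : v ∈ D) {s : ℝ} (hs : s ∈ Icc (0:ℝ) T) : 0 ≤ E s v := by
  obtain ⟨hC, h⟩ := hEc
  obtain ⟨hcont, _, hbd⟩ := h v hv
  have hIoo : ∀ r ∈ Ioo (0:ℝ) T, 0 ≤ E r v := by
    intro r hr
    have h1 := hbd r hr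
    nlinarith [abs_nonneg (Edot r v)]
  have hne : (𝓝[Ioo (0:ℝ) T] s).NeBot := by
    refine mem_closure_iff_nhdsWithin_neBot.mp ?_
    rw [closure_Ioo hT.ne]; exact hs
  have htd : Tendsto (fun r => E r v) (𝓝[Ioo (0:ℝ) T] s) (𝓝 (E s v)) :=
    ((hcont s hs).mono Ioo_subset_Icc_self)
  exact ge_of_tendsto htd (eventually_mem_nhdsWithin.mono hIoo)

set_option maxHeartbeats 1000000 in
private lemma aux_gronwall {V : Type*} [NormedAddCommGroup V] [NormedSpace ℝ V]
    (T : ℝ) (E : ℝ → V → ℝ) (D : Set V)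
    (Edot : ℝ → V → ℝ) (C : ℝ) (hEc : AssumpEc T E D Edot C)
    {v : V} (hv : v ∈ D) {s₁ s₂ : ℝ}
    (h1 : s₁ ∈ Icc (0:ℝ) T) (h2 : s₂ ∈ Icc (0:ℝ) T) (h12 : s₁ ≤ s₂) :
    Real.exp (C * s₁) * E s₁ v ≤ Real.exp (C * s₂) * E s₂ v := by
  obtain ⟨hC, h⟩ := hEc
  obtain ⟨hcont, hderiv, hbd⟩ := h v hv
  have hmono : MonotoneOn (fun s => Real.exp (C * s) * E s v) (Icc (0:ℝ) T) := by
    apply monotoneOn_of_hasDerivWithinAt_nonneg (f' := fun s =>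
        C * Real.exp (C * s) * E s v + Real.exp (C * s) * Edot s v) (convex_Icc 0 T)
    · exact ((Real.continuous_exp.comp
        (continuous_const.mul continuous_id)).continuousOn).mul hcont
    · intro x hx
      rw [interior_Icc] at hx
      have hexp : HasDerivAt (fun s => Real.exp (C * s)) (Real.exp (C * x) * C) x := by
        simpa using ((hasDerivAt_id x).const_mul C).exp
      exact ((hexp.mul (hderiv x hx)).congr_deriv (by ring)).hasDerivWithinAt
    · intro x hx
      rw [interior_Icc] at hx
      have hb := hbd x hx
      nlinarith [Real.exp_pos (C * x), neg_abs_le (Edot x v)]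
  exact hmono h1 h2 h12

private lemma aux_psi_lb {V : Type*} [NormedAddCommGroup V] [NormedSpace ℝ V]
    (T : ℝ) (E : ℝ → V → ℝ) (D : Set V) (Ψ : V → V → ℝ)
    (hPa : AssumpPsiA Ψ) (hPb : AssumpPsiB T E D Ψ) {R : ℝ} (hR : 0 < R)
    {u : V} (hu : GSublevel T E D u R) {K : ℝ} (hK : 0 ≤ K) :
    ∃ ρ ≥ (0:ℝ), ∀ z : V, K * ‖z‖ - K * ρ ≤ Ψ u z := by
  obtain ⟨ρ, hρ⟩ := (hPb R hR).1 K
  refine ⟨max ρ 0, le_max_right _ _, fun z => ?_⟩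
  rcases le_or_gt (max ρ 0) ‖z‖ with h | h
  · have h1 := hρ z (le_trans (le_max_left _ _) h) u hu
    nlinarith [mul_nonneg hK (le_max_right ρ 0)]
  · have h0 := (hPa u).2.2.2.1 z
    nlinarith [mul_le_mul_of_nonneg_left h.le hK]

private lemma aux_phi_top {V : Type*} [NormedAddCommGroup V] [NormedSpace ℝ V]
    (T : ℝ) (E : ℝ → V → ℝ) (D : Set V) (Ψ : V → V → ℝ)
    (r t : ℝ) (u : V) (w : StrongDual ℝ V) {v : V} (hv : v ∉ D) :
    PhiFun T E D Ψ r t u w v = ⊤ := by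
  unfold PhiFun Eext
  rw [if_neg hv]
  exact EReal.coe_add_top _

private lemma aux_phi_ub {V : Type*} [NormedAddCommGroup V] [NormedSpace ℝ V]
    (T : ℝ) (E : ℝ → V → ℝ) (D : Set V) (Ψ : V → V → ℝ)
    (hPa : AssumpPsiA Ψ) (r t : ℝ) {u : V} (hu : u ∈ D) (w : StrongDual ℝ V) :
    PhiInf T E D Ψ r t u w ≤ ((E (t + r) u - w u : ℝ) : EReal) := by
  refine le_trans (iInf_le _ u) (le_of_eq ?_)
  unfold PhiFun Eext
  rw [if_pos hu, ← EReal.coe_add, EReal.coe_eq_coe_iff]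
  rw [sub_self, smul_zero, (hPa u).2.2.1]
  ring

set_option maxHeartbeats 1000000 in
private lemma aux_phi_lb {V : Type*} [NormedAddCommGroup V] [NormedSpace ℝ V]
    (T : ℝ) (E : ℝ → V → ℝ) (D : Set V) (Ψ : V → V → ℝ)
    {r : ℝ} (t : ℝ) (hr : 0 < r) (u : V) (w : StrongDual ℝ V)
    {K ρ : ℝ} (hKw : ‖w‖ ≤ K) (hρ : 0 ≤ ρ)
    (hψ : ∀ z : V, K * ‖z‖ - K * ρ ≤ Ψ u z) {v : V} (hv : v ∈ D) :
    (((K - ‖w‖) * ‖v - u‖ - K * ρ * r - w u + E (t + r) v : ℝ) : EReal)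
      ≤ PhiFun T E D Ψ r t u w v := by
  unfold PhiFun Eext
  rw [if_pos hv, ← EReal.coe_add, EReal.coe_le_coe_iff]
  have h1 := hψ (r⁻¹ • (v - u))
  rw [norm_smul, norm_inv, Real.norm_eq_abs, abs_of_pos hr] at h1
  have h1' := mul_le_mul_of_nonneg_left h1 hr.le
  have h2 : w v = w (v - u) + w u := by
    rw [← map_add]; congr 1; abel
  have h3 : w (v - u) ≤ ‖w‖ * ‖v - u‖ :=
    le_trans (le_abs_self _) (by simpa [Real.norm_eq_abs] using w.le_opNorm (v - u))
  have h4 : r * (K * (r⁻¹ * ‖v - u‖) - K * ρ) = K * ‖v - u‖ - K * ρ * r := by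
    field_simp
  rw [h4] at h1'
  nlinarith [norm_nonneg (v - u)]

private lemma aux_frac (a ε r : ℝ) (ha : 0 ≤ a) (hε : 0 < ε) (hr : 0 ≤ r)
    (h : r ≤ ε / (a + 1)) : a * r ≤ ε := by
  have h1 : a * r ≤ a * (ε / (a + 1)) := mul_le_mul_of_nonneg_left h ha
  have h2 : a * (ε / (a + 1)) ≤ ε := by
    rw [mul_comm, div_mul_eq_mul_div, div_le_iff₀ (by linarith)]
    nlinarith
  linarith

private lemma aux_delta (ε a b c : ℝ) (hε : 0 < ε) (ha : 0 ≤ a) (hb : 0 ≤ b) (hc : 0 ≤ c) :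
    ∃ δ : ℝ, 0 < δ ∧ ∀ r : ℝ, 0 ≤ r → r ≤ δ → a * r ≤ ε ∧ b * r ≤ ε ∧ c * r ≤ ε := by
  refine ⟨min (ε / (a + 1)) (min (ε / (b + 1)) (ε / (c + 1))),
    lt_min (by positivity) (lt_min (by positivity) (by positivity)), fun r hr0 hrδ => ?_⟩
  exact ⟨aux_frac a ε r ha hε hr0 (hrδ.trans (min_le_left _ _)),
    aux_frac b ε r hb hε hr0 (hrδ.trans ((min_le_right _ _).trans (min_le_left _ _))),
    aux_frac c ε r hc hε hr0 (hrδ.trans ((min_le_right _ _).trans (min_le_right _ _)))⟩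

set_option maxHeartbeats 1000000 in
/-- **Convergence of the Moreau–Yosida regularization** (part of Lemma 2.4, (2.16)).
For `t ∈ [0,T)`, `u ∈ D` and `w ∈ V*`:
`lim_{r→0⁺} sup_{u_r ∈ J_{r,t}(w;u)} ‖u_r - u‖ = 0` and
`lim_{r→0⁺} Φ_{r,t}(w;u) = E_t(u) - ⟨w,u⟩`. -/
theorem moreau_yosida_convergence
    (T : ℝ) (hT : 0 < T)
    (E : ℝ → V → ℝ) (D : Set V) (Edot : ℝ → V → ℝ) (C : ℝ) (Ψ : V → V → ℝ)
    (hEa : AssumpEa T E D) (hEb : AssumpEb T E D) (hEc : AssumpEc T E D Edot C)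
    (hPa : AssumpPsiA Ψ) (hPb : AssumpPsiB T E D Ψ)
    (t : ℝ) (ht : t ∈ Ico (0:ℝ) T) (u : V) (hu : u ∈ D) (w : StrongDual ℝ V) :
    (∀ ε > (0:ℝ), ∃ δ > (0:ℝ), ∀ r : ℝ, 0 < r → r < δ → r ≤ T - t →
      ∀ ur ∈ resolventJ T E D Ψ r t u w, ‖ur - u‖ < ε)
    ∧ Tendsto (fun r => PhiInf T E D Ψ r t u w) (𝓝[Ioo (0:ℝ) (T - t)] 0)
        (𝓝 (((E t u - w u : ℝ) : EReal))) := by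
  classical
  obtain ⟨hC, hEcfun⟩ := hEc
  obtain ⟨hcontu, _, _⟩ := hEcfun u hu
  obtain ⟨M, hM⟩ := isCompact_Icc.exists_bound_of_continuousOn hcontu
  obtain ⟨R, hR, huR⟩ : ∃ R : ℝ, 0 < R ∧ GSublevel T E D u R := by
    refine ⟨max M 1, lt_of_lt_of_le one_pos (le_max_right _ _),
      hu, fun s hs => le_trans (le_trans (le_abs_self _) ?_) (le_max_left _ _)⟩
    simpa using hM s hs
  have htIcc : t ∈ Icc (0:ℝ) T := ⟨ht.1, ht.2.le⟩
  have hEtu0 : 0 ≤ E t u := aux_E_nonneg T hT E D Edot C ⟨hC, hEcfun⟩ hu htIcc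
  have htr : ∀ {r : ℝ}, 0 < r → r ≤ T - t → t + r ∈ Icc (0:ℝ) T := by
    intro r h1 h2; exact ⟨by linarith [ht.1], by linarith⟩
  constructor
  · -- Part 1: convergence of the resolvents
    intro ε hε
    obtain ⟨K, hK0, hKw⟩ : ∃ K : ℝ, ‖w‖ ≤ K ∧ K - ‖w‖ = (R + 2) / ε := by
      refine ⟨‖w‖ + (R + 2) / ε, ?_, by ring⟩
      have : 0 < (R + 2) / ε := div_pos (by linarith) hε
      linarith
    have hKnn : 0 ≤ K := le_trans (norm_nonneg w) hK0
    obtain ⟨ρ, hρ0, hψ⟩ := aux_psi_lb T E D Ψ hPa hPb hR huR hKnn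
    obtain ⟨δ, hδ0, hδ⟩ := aux_delta 1 (K * ρ) 0 0 one_pos (mul_nonneg hKnn hρ0)
      le_rfl le_rfl
    refine ⟨δ, hδ0, fun r hr0 hrδ hrT ur hur => ?_⟩
    have htrI := htr hr0 hrT
    have hub : PhiInf T E D Ψ r t u w ≤ ((R - w u : ℝ) : EReal) := by
      refine le_trans (aux_phi_ub T E D Ψ hPa r t hu w) ?_
      rw [EReal.coe_le_coe_iff]
      have := huR.2 (t + r) htrI
      linarith
    have hurD : ur ∈ D := by
      by_contra h
      have htop := aux_phi_top T E D Ψ r t u w h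
      rw [hur] at htop
      rw [htop] at hub
      exact EReal.coe_ne_top _ (top_le_iff.mp hub)
    have hlb := aux_phi_lb T E D Ψ t hr0 u w hK0 hρ0 hψ hurD
    rw [hur] at hlb
    have hcomb := le_trans hlb hub
    rw [EReal.coe_le_coe_iff, hKw] at hcomb
    have hEur0 : 0 ≤ E (t + r) ur :=
      aux_E_nonneg T hT E D Edot C ⟨hC, hEcfun⟩ hurD htrI
    have hKρr : K * ρ * r ≤ 1 := (hδ r hr0.le hrδ.le).1
    have hfin : (R + 2) / ε * ‖ur - u‖ ≤ R + 1 := by linarith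
    rw [div_mul_eq_mul_div, div_le_iff₀ hε] at hfin
    nlinarith [norm_nonneg (ur - u)]
  · -- Part 2: convergence of the Moreau--Yosida regularization
    rw [tendsto_order]
    have hmemIoo : ∀ᶠ r in 𝓝[Ioo (0:ℝ) (T - t)] (0:ℝ), r ∈ Ioo (0:ℝ) (T - t) :=
      eventually_mem_nhdsWithin
    have hEcont : Tendsto (fun r => E (t + r) u) (𝓝[Ioo (0:ℝ) (T - t)] (0:ℝ))
        (𝓝 (E t u)) := by
      have h1 : Tendsto (fun r : ℝ => t + r) (𝓝[Ioo (0:ℝ) (T - t)] (0:ℝ))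
          (𝓝[Icc (0:ℝ) T] t) := by
        rw [tendsto_nhdsWithin_iff]
        constructor
        · have h2 : Tendsto (fun r : ℝ => t + r) (𝓝 (0:ℝ)) (𝓝 (t + 0)) :=
            tendsto_const_nhds.add tendsto_id
          rw [add_zero] at h2
          exact h2.mono_left nhdsWithin_le_nhds
        · filter_upwards [hmemIoo] with r hr
          exact ⟨by linarith [hr.1, ht.1], by linarith [hr.2]⟩
      exact (hcontu t htIcc).tendsto.comp h1
    constructor
    · -- lower bound
      intro a' ha'
      obtain ⟨m, ham, hmc⟩ := EReal.lt_iff_exists_real_btwn.mp ha'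
      rw [EReal.coe_lt_coe_iff] at hmc
      obtain ⟨ε, hε, hεm⟩ : ∃ ε : ℝ, 0 < ε ∧ m < E t u - w u - 3 * ε :=
        ⟨(E t u - w u - m) / 4, by linarith, by linarith⟩
      -- lower semicontinuity at u
      have hlsc := hEa.2 t htIcc u (((E t u - ε : ℝ) : EReal)) (by
        unfold Eext; simp only [gt_iff_lt, if_pos hu, EReal.coe_lt_coe_iff]; linarith)
      obtain ⟨η, hη, hball⟩ := Metric.eventually_nhds_iff.mp hlsc
      -- two superlinearity bounds
      obtain ⟨ρ₀, hρ₀0, hψ₀⟩ := aux_psi_lb T E D Ψ hPa hPb hR huR (norm_nonneg w)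
      obtain ⟨K₁, hK₁w, hK₁η⟩ : ∃ K₁ : ℝ, ‖w‖ ≤ K₁ ∧ (K₁ - ‖w‖) * η = E t u := by
        refine ⟨‖w‖ + E t u / η, ?_, by field_simp; ring⟩
        have : 0 ≤ E t u / η := div_nonneg hEtu0 hη.le
        linarith
      have hK₁nn : 0 ≤ K₁ := le_trans (norm_nonneg w) hK₁w
      obtain ⟨ρ₁, hρ₁0, hψ₁⟩ := aux_psi_lb T E D Ψ hPa hPb hR huR hK₁nn
      obtain ⟨δ, hδ0, hδ⟩ := aux_delta ε (C * (E t u + 1)) (‖w‖ * ρ₀) (K₁ * ρ₁) hε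
        (by positivity) (mul_nonneg (norm_nonneg w) hρ₀0) (mul_nonneg hK₁nn hρ₁0)
      have hev : ∀ᶠ r in 𝓝[Ioo (0:ℝ) (T - t)] (0:ℝ), |r| < δ := by
        refine eventually_nhdsWithin_of_eventually_nhds ?_
        filter_upwards [Metric.ball_mem_nhds (0:ℝ) hδ0] with r hr
        simpa [Real.dist_eq] using hr
      filter_upwards [hmemIoo, hev] with r hrIoo hrδ
      have hr0 : 0 < r := hrIoo.1
      have hrT : r ≤ T - t := hrIoo.2.le
      have hrδ' : r ≤ δ := (lt_of_le_of_lt (le_abs_self r) hrδ).le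
      obtain ⟨hδa, hδb, hδc⟩ := hδ r hr0.le hrδ'
      have htrI := htr hr0 hrT
      have key : (((E t u - w u - 3 * ε : ℝ)) : EReal) ≤ PhiInf T E D Ψ r t u w := by
        refine le_iInf fun v => ?_
        by_cases hvD : v ∈ D
        · have hEv0 : 0 ≤ E (t + r) v :=
            aux_E_nonneg T hT E D Edot C ⟨hC, hEcfun⟩ hvD htrI
          rcases lt_or_ge ‖v - u‖ η with hvu | hvu
          · -- near u: use lsc + Gronwall
            have hEtv : E t u - ε ≤ E t v := by
              have hb := hball (show dist v u < η by rwa [dist_eq_norm])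
              unfold Eext at hb
              simp only [gt_iff_lt, if_pos hvD, EReal.coe_lt_coe_iff] at hb
              linarith
            have hEtv0 : 0 ≤ E t v :=
              aux_E_nonneg T hT E D Edot C ⟨hC, hEcfun⟩ hvD htIcc
            have hgr := aux_gronwall T E D Edot C ⟨hC, hEcfun⟩ hvD htIcc htrI
              (by linarith : t ≤ t + r)
            have hgr' : Real.exp (-(C * r)) * E t v ≤ E (t + r) v := by
              have h2 : Real.exp (-(C * (t + r)) + C * t) * E t v
                  ≤ Real.exp (-(C * (t + r)) + C * (t + r)) * E (t + r) v := by
                rw [Real.exp_add, Real.exp_add, mul_assoc, mul_assoc]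
                exact mul_le_mul_of_nonneg_left hgr (Real.exp_pos _).le
              have h3 : -(C * (t + r)) + C * t = -(C * r) := by ring
              have h4 : -(C * (t + r)) + C * (t + r) = 0 := by ring
              rw [h3, h4, Real.exp_zero, one_mul] at h2
              exact h2
            have hexp1 : 1 - C * r ≤ Real.exp (-(C * r)) := by
              have := Real.add_one_le_exp (-(C * r)); linarith
            have hexp2 : Real.exp (-(C * r)) ≤ 1 := by
              calc Real.exp (-(C * r)) ≤ Real.exp 0 :=
                    Real.exp_le_exp.mpr (by nlinarith)
                _ = 1 := Real.exp_zero
            have hCr0 : 0 ≤ C * r := by positivity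
            have hCrε : 0 ≤ C * r * ε := by positivity
            have hE2ε : E t u - 2 * ε ≤ E (t + r) v := by
              rcases le_or_gt 0 (E t u - ε) with hcase | hcase
              · have a1 : Real.exp (-(C * r)) * (E t u - ε)
                    ≤ Real.exp (-(C * r)) * E t v :=
                  mul_le_mul_of_nonneg_left hEtv (Real.exp_pos _).le
                have a2 : (1 - C * r) * (E t u - ε)
                    ≤ Real.exp (-(C * r)) * (E t u - ε) :=
                  mul_le_mul_of_nonneg_right hexp1 hcase
                nlinarith
              · nlinarith [mul_le_mul_of_nonneg_left hEtv0 (Real.exp_pos (-(C * r))).le]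
            have hlb := aux_phi_lb T E D Ψ t hr0 u w le_rfl hρ₀0 hψ₀ hvD
            refine le_trans ?_ hlb
            rw [EReal.coe_le_coe_iff]
            nlinarith [norm_nonneg (v - u)]
          · -- far from u: use strong superlinearity
            have hlb := aux_phi_lb T E D Ψ t hr0 u w hK₁w hρ₁0 hψ₁ hvD
            refine le_trans ?_ hlb
            rw [EReal.coe_le_coe_iff]
            have h1 : (K₁ - ‖w‖) * η ≤ (K₁ - ‖w‖) * ‖v - u‖ :=
              mul_le_mul_of_nonneg_left hvu (by linarith)
            linarith
        · rw [aux_phi_top T E D Ψ r t u w hvD]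
          exact le_top
      refine lt_of_lt_of_le (lt_of_lt_of_le ham ?_) key
      rw [EReal.coe_le_coe_iff]
      linarith
    · -- upper bound
      intro b' hb'
      obtain ⟨m, hcm, hmb⟩ := EReal.lt_iff_exists_real_btwn.mp hb'
      rw [EReal.coe_lt_coe_iff] at hcm
      have hevE : ∀ᶠ r in 𝓝[Ioo (0:ℝ) (T - t)] (0:ℝ), E (t + r) u < m + w u :=
        hEcont.eventually_lt_const (by linarith)
      filter_upwards [hmemIoo, hevE] with r hrIoo hrE
      have hub := aux_phi_ub T E D Ψ hPa r t hu w
      refine lt_of_le_of_lt (hub.trans ?_) hmb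
      rw [EReal.coe_le_coe_iff]
      linarith
end
end

section
/- (Almost-everywhere differentiability of the Moreau–Yosida value) Let V be a real Banach space, T > 0, let the energy family E satisfy (E-a), (E-b), (E-c) (with constant C), and let the dissipation potentials Ψ satisfy (Ψ-a) and (Ψ-b). Fix t ∈ [0,T), u ∈ D and w ∈ V* with Ψ_u*(w) < ∞. Then the map r ↦ Φ_{r,t}(w;u) − r·C·e^{CT}·( G(u) + T·Ψ_u*(w) ) is non-increasing on (0, T−t); in particular, the map r ↦ Φ_{r,t}(w;u) is differentiable at almost every r ∈ (0, T−t). -/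
open MeasureTheory Filter Topology Set
open scoped Classical

noncomputable section

variable {V : Type*} [NormedAddCommGroup V] [NormedSpace ℝ V]

private lemma gronwall_aux' {E Ed : ℝ → ℝ} {C T s1 s2 : ℝ}     (hcont : ContinuousOn E (Icc 0 T))
    (hderiv : ∀ s ∈ Ioo 0 T, HasDerivAt E (Ed s) s)
    (hbd : ∀ s ∈ Ioo 0 T, |Ed s| ≤ C * E s)
    (h1 : 0 < s1) (h12 : s1 ≤ s2) (h2 : s2 < T) :
    E s2 ≤ E s1 * Real.exp (C * (s2 - s1)) := by
  have hsub : Icc s1 s2 ⊆ Icc 0 T := Icc_subset_Icc h1.le h2.le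
  have hioo : Ioo s1 s2 ⊆ Ioo 0 T := Ioo_subset_Ioo h1.le h2.le
  have hanti : AntitoneOn (fun s => E s * Real.exp (-C * s)) (Icc s1 s2) := by
    apply antitoneOn_of_hasDerivWithinAt_nonpos (convex_Icc _ _)
      (f' := fun x => Ed x * Real.exp (-C * x) + E x * (Real.exp (-C * x) * (-C * 1)))
    · exact (hcont.mono hsub).mul
        ((Real.continuous_exp.comp (continuous_const.mul continuous_id)).continuousOn)
    · intro x hx
      rw [interior_Icc] at hx
      exact (((hderiv x (hioo hx)).mul
        (((hasDerivAt_id x).const_mul (-C)).exp))).hasDerivWithinAt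
    · intro x hx
      rw [interior_Icc] at hx
      have hb := hbd x (hioo hx)
      have h3 : Ed x - C * E x ≤ 0 := by
        have := le_abs_self (Ed x); linarith
      have hex := Real.exp_pos (-C * x)
      nlinarith [mul_nonpos_of_nonneg_of_nonpos hex.le h3]
  have hf : E s2 * Real.exp (-C * s2) ≤ E s1 * Real.exp (-C * s1) :=
    hanti (left_mem_Icc.2 h12) (right_mem_Icc.2 h12) h12
  have key := mul_le_mul_of_nonneg_right hf (Real.exp_pos (C * s2)).le
  have e1 : Real.exp (-C * s2) * Real.exp (C * s2) = 1 := by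
    rw [← Real.exp_add, show (-C * s2 + C * s2) = 0 by ring, Real.exp_zero]
  have e2 : Real.exp (-C * s1) * Real.exp (C * s2) = Real.exp (C * (s2 - s1)) := by
    rw [← Real.exp_add]; congr 1; ring
  calc E s2 = E s2 * Real.exp (-C * s2) * Real.exp (C * s2) := by
        rw [mul_assoc, e1, mul_one]
    _ ≤ E s1 * Real.exp (-C * s1) * Real.exp (C * s2) := key
    _ = E s1 * Real.exp (C * (s2 - s1)) := by rw [mul_assoc, e2]

private lemma exp_sub_one_le_aux' {x M : ℝ} (hx : 0 ≤ x) (hxM : x ≤ M) :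
    Real.exp x - 1 ≤ x * Real.exp M := by
  have h1 : (1 - x) * Real.exp x ≤ 1 := by
    have h := Real.add_one_le_exp (-x)
    calc (1 - x) * Real.exp x ≤ Real.exp (-x) * Real.exp x :=
          mul_le_mul_of_nonneg_right (by linarith) (Real.exp_pos x).le
      _ = 1 := by rw [← Real.exp_add, neg_add_cancel, Real.exp_zero]
  have h2 : x * Real.exp x ≤ x * Real.exp M :=
    mul_le_mul_of_nonneg_left (Real.exp_le_exp.2 hxM) hx
  nlinarith [h1, h2]


set_option maxHeartbeats 1000000 in
/-- **Almost-everywhere differentiability of the Moreau–Yosida value** (part of Lemma 2.4,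
see (2.21)). With `p = Ψ*_u(w) < ∞` and `GR = sup_{s∈[0,T]} E_s(u)`, the map
`r ↦ Φ_{r,t}(w;u) - r C e^{CT} (GR + T p)` is non-increasing on `(0, T-t)`; in particular
`r ↦ Φ_{r,t}(w;u)` is differentiable (as a real-valued map) at almost every
`r ∈ (0, T-t)`. -/
theorem moreau_yosida_ae_differentiable
    (T : ℝ) (hT : 0 < T)
    (E : ℝ → V → ℝ) (D : Set V) (Edot : ℝ → V → ℝ) (C : ℝ) (Ψ : V → V → ℝ)
    (hEa : AssumpEa T E D) (hEb : AssumpEb T E D) (hEc : AssumpEc T E D Edot C)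
    (hPa : AssumpPsiA Ψ) (hPb : AssumpPsiB T E D Ψ)
    (t : ℝ) (ht : t ∈ Ico (0:ℝ) T) (u : V) (hu : u ∈ D) (w : StrongDual ℝ V)
    (p : ℝ) (hp : conjFn (Ψ u) w = ((p : ℝ) : EReal))
    (GR : ℝ) (hGR : GR = sSup ((fun s => E s u) '' Icc (0:ℝ) T)) :
    AntitoneOn
      (fun r => PhiInf T E D Ψ r t u w
        - ((C * Real.exp (C * T) * (GR + T * p) * r : ℝ) : EReal))
      (Ioo (0:ℝ) (T - t))
    ∧ ∀ᵐ r ∂(volume.restrict (Ioo (0:ℝ) (T - t))),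
        ∃ d : ℝ, HasDerivAt (fun s => (PhiInf T E D Ψ s t u w).toReal) d r := by
  obtain ⟨hC, hE⟩ := hEc
  obtain ⟨_, hconv, hzero, hnonneg, -⟩ := hPa u
  set K : ℝ := C * Real.exp (C * T) * (GR + T * p) with hK
  set g : ℝ → ℝ := fun r => (PhiInf T E D Ψ r t u w).toReal with hg
  -- Fenchel–Young
  have FY : ∀ x : V, w x ≤ Ψ u x + p := by
    intro x
    have h1 : ((w x - Ψ u x : ℝ) : EReal) ≤ conjFn (Ψ u) w :=
      le_iSup (fun v : V => ((w v - Ψ u v : ℝ) : EReal)) x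
    rw [hp, EReal.coe_le_coe_iff] at h1
    linarith
  have hp0 : 0 ≤ p := by have := FY 0; simp [hzero] at this; linarith [this]
  have Epos : ∀ v ∈ D, ∀ s ∈ Ioo (0:ℝ) T, 0 ≤ E s v := by
    intro v hv s hs
    have h1 := (hE v hv).2.2 s hs
    nlinarith [abs_nonneg (Edot s v)]
  have hbdd : BddAbove ((fun s => E s u) '' Icc (0:ℝ) T) :=
    (isCompact_Icc.image_of_continuousOn (hE u hu).1).bddAbove
  have hGRle : ∀ s ∈ Icc (0:ℝ) T, E s u ≤ GR := by
    intro s hs; rw [hGR]; exact le_csSup hbdd (mem_image_of_mem _ hs)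
  have hGR0 : 0 ≤ GR := le_trans (Epos u hu (T/2) ⟨by linarith, by linarith⟩)
    (hGRle (T/2) ⟨by linarith, by linarith⟩)
  have htr : ∀ r ∈ Ioo (0:ℝ) (T - t), t + r ∈ Ioo (0:ℝ) T := by
    intro r hr; exact ⟨by have := ht.1; have := hr.1; linarith, by have := hr.2; linarith⟩
  have hfunD : ∀ (r : ℝ) (v : V), v ∈ D →
      PhiFun T E D Ψ r t u w v = ((r * Ψ u (r⁻¹ • (v - u)) - w v + E (t + r) v : ℝ) : EReal) := by
    intro r v hv
    simp only [PhiFun, Eext, if_pos hv, ← EReal.coe_add]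
  have hfunN : ∀ (r : ℝ) (v : V), v ∉ D → PhiFun T E D Ψ r t u w v = ⊤ := by
    intro r v hv
    simp only [PhiFun, Eext, if_neg hv, EReal.coe_add_top]
  have hwsmul : ∀ (r : ℝ), 0 < r → ∀ v : V, w (v - u) = r * w (r⁻¹ • (v - u)) := by
    intro r hr v
    calc w (v - u) = w (r • (r⁻¹ • (v - u))) := by rw [smul_inv_smul₀ (ne_of_gt hr)]
      _ = r * w (r⁻¹ • (v - u)) := by rw [w.map_smul]; simp
  have hwbound : ∀ (r : ℝ), 0 < r → ∀ v : V,
      w (v - u) ≤ r * Ψ u (r⁻¹ • (v - u)) + r * p := by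
    intro r hr v
    calc w (v - u) = r * w (r⁻¹ • (v - u)) := hwsmul r hr v
      _ ≤ r * (Ψ u (r⁻¹ • (v - u)) + p) :=
          mul_le_mul_of_nonneg_left (FY _) hr.le
      _ = r * Ψ u (r⁻¹ • (v - u)) + r * p := by ring
  have hlb : ∀ r ∈ Ioo (0:ℝ) (T - t), ∀ v : V,
      ((-(w u) - r * p : ℝ) : EReal) ≤ PhiFun T E D Ψ r t u w v := by
    intro r hr v
    by_cases hv : v ∈ D
    · rw [hfunD r v hv, EReal.coe_le_coe_iff]
      have hEv := Epos v hv (t + r) (htr r hr)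
      have h2 := hwbound r hr.1 v
      have h3 : w v = w u + w (v - u) := by rw [← map_add]; congr 1; abel
      linarith
    · rw [hfunN r v hv]; exact le_top
  have hub : ∀ r ∈ Ioo (0:ℝ) (T - t),
      PhiInf T E D Ψ r t u w ≤ ((GR - w u : ℝ) : EReal) := by
    intro r hr
    have h1 : PhiInf T E D Ψ r t u w ≤ PhiFun T E D Ψ r t u w u := iInf_le _ u
    rw [hfunD r u hu] at h1
    refine h1.trans ?_
    rw [EReal.coe_le_coe_iff]
    have h2 := hGRle (t + r) ⟨(htr r hr).1.le, (htr r hr).2.le⟩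
    have h3 : r * Ψ u (r⁻¹ • (u - u)) = 0 := by
      simp [hzero]
    linarith
  have hlbInf : ∀ r ∈ Ioo (0:ℝ) (T - t),
      ((-(w u) - r * p : ℝ) : EReal) ≤ PhiInf T E D Ψ r t u w := by
    intro r hr; exact le_iInf (hlb r hr)
  have hreal : ∀ r ∈ Ioo (0:ℝ) (T - t),
      PhiInf T E D Ψ r t u w = ((g r : ℝ) : EReal) := by
    intro r hr
    have h1 := hlbInf r hr
    have h2 := hub r hr
    have hnt : PhiInf T E D Ψ r t u w ≠ ⊤ := ne_top_of_le_ne_top (EReal.coe_ne_top _) h2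
    have hnb : PhiInf T E D Ψ r t u w ≠ ⊥ := by
      intro hbot; rw [hbot] at h1; exact (EReal.coe_ne_bot _) (le_bot_iff.1 h1)
    exact (EReal.coe_toReal hnt hnb).symm
  have hgub : ∀ r ∈ Ioo (0:ℝ) (T - t), g r ≤ GR - w u := by
    intro r hr
    have h := hub r hr; rw [hreal r hr, EReal.coe_le_coe_iff] at h; exact h
  -- key inequality
  have key : ∀ r1 ∈ Ioo (0:ℝ) (T - t), ∀ r2 ∈ Ioo (0:ℝ) (T - t), r1 ≤ r2 →
      g r2 ≤ g r1 + (GR + T * p) * (Real.exp (C * (r2 - r1)) - 1) := by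
    intro r1 hr1 r2 hr2 h12
    have hexp1 : (1:ℝ) ≤ Real.exp (C * (r2 - r1)) :=
      Real.one_le_exp (by nlinarith [hC])
    refine le_of_forall_sub_le ?_
    intro ε' hε'
    rw [sub_le_iff_le_add]
    set eC : ℝ := Real.exp (C * (r2 - r1)) with heCdef
    have heCpos : (0:ℝ) < eC := Real.exp_pos _
    set ε : ℝ := ε' / eC with hεdef
    have hε : 0 < ε := div_pos hε' heCpos
    have hlt : PhiInf T E D Ψ r1 t u w < ((g r1 + ε : ℝ) : EReal) := by
      rw [hreal r1 hr1, EReal.coe_lt_coe_iff]; linarith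
    rw [PhiInf, iInf_lt_iff] at hlt
    obtain ⟨v, hv⟩ := hlt
    have hvD : v ∈ D := by
      by_contra hvD
      rw [hfunN r1 v hvD] at hv
      exact (not_top_lt) hv
    rw [hfunD r1 v hvD, EReal.coe_lt_coe_iff] at hv
    set x1 : V := r1⁻¹ • (v - u) with hx1def
    set x2 : V := r2⁻¹ • (v - u) with hx2def
    have hgron : E (t + r2) v ≤ E (t + r1) v * eC := by
      have h := gronwall_aux' (E := fun s => E s v) (Ed := fun s => Edot s v)
        (hE v hvD).1 (hE v hvD).2.1 (hE v hvD).2.2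
        (htr r1 hr1).1 (by linarith) (htr r2 hr2).2
      simpa [show t + r2 - (t + r1) = r2 - r1 by ring] using h
    have hE1nn : 0 ≤ E (t + r1) v := Epos v hvD _ (htr r1 hr1)
    have hE1ub : E (t + r1) v ≤ GR + T * p + ε := by
      have h3 : w v = w u + w (v - u) := by rw [← map_add]; congr 1; abel
      have h4 := hwbound r1 hr1.1 v
      have h6 : g r1 ≤ GR - w u := hgub r1 hr1
      have h7 : r1 * p ≤ T * p := by
        have : r1 ≤ T := by have := hr1.2; have := ht.1; linarith
        exact mul_le_mul_of_nonneg_right this hp0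
      linarith [hv]
    have hscale : r2 * Ψ u x2 ≤ r1 * Ψ u x1 := by
      have h1ne : r1 ≠ 0 := ne_of_gt hr1.1
      have h2ne : r2 ≠ 0 := ne_of_gt hr2.1
      have ha : (0:ℝ) < r1 / r2 := div_pos hr1.1 hr2.1
      have ha1 : r1 / r2 ≤ 1 := (div_le_one hr2.1).2 h12
      have hx2 : x2 = (r1 / r2) • x1 := by
        rw [hx2def, hx1def, smul_smul, show r1 / r2 * r1⁻¹ = r2⁻¹ by field_simp]
      have hcx : Ψ u ((r1 / r2) • x1 + (1 - r1 / r2) • (0:V))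
          ≤ (r1 / r2) • Ψ u x1 + (1 - r1 / r2) • Ψ u 0 :=
        hconv.2 (mem_univ x1) (mem_univ (0:V)) ha.le (by linarith) (by ring)
      rw [smul_zero, add_zero, hzero, smul_eq_mul, smul_eq_mul, mul_zero, add_zero,
        ← hx2] at hcx
      calc r2 * Ψ u x2 ≤ r2 * (r1 / r2 * Ψ u x1) :=
            mul_le_mul_of_nonneg_left hcx hr2.1.le
        _ = r1 * Ψ u x1 := by field_simp
    have hg2 : g r2 ≤ r2 * Ψ u x2 - w v + E (t + r2) v := by
      have h1 : PhiInf T E D Ψ r2 t u w ≤ PhiFun T E D Ψ r2 t u w v := iInf_le _ v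
      rw [hreal r2 hr2, hfunD r2 v hvD, EReal.coe_le_coe_iff] at h1
      exact h1
    have heC1 : (0:ℝ) ≤ eC - 1 := by linarith
    have hmul : E (t + r1) v * (eC - 1) ≤ (GR + T * p + ε) * (eC - 1) :=
      mul_le_mul_of_nonneg_right hE1ub heC1
    have hεeC : ε * eC = ε' := by
      rw [hεdef]; field_simp
    have hexpand : E (t + r1) v * eC = E (t + r1) v + E (t + r1) v * (eC - 1) := by ring
    have hexpand2 : (GR + T * p + ε) * (eC - 1)
        = (GR + T * p) * (eC - 1) + ε * eC - ε := by ring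
    linarith [hv, hg2, hscale, hgron, hmul]
  have hmono : ∀ r1 ∈ Ioo (0:ℝ) (T - t), ∀ r2 ∈ Ioo (0:ℝ) (T - t), r1 ≤ r2 →
      g r2 - K * r2 ≤ g r1 - K * r1 := by
    intro r1 hr1 r2 hr2 h12
    have hkey := key r1 hr1 r2 hr2 h12
    have hx : (0:ℝ) ≤ C * (r2 - r1) := by nlinarith [hC]
    have hxM : C * (r2 - r1) ≤ C * T := by nlinarith [hC, hr2.2, hr1.1, ht.1]
    have hexp := exp_sub_one_le_aux' hx hxM
    have hGRTp : (0:ℝ) ≤ GR + T * p := by nlinarith [hp0, hT, hGR0]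
    have h2 : (GR + T * p) * (Real.exp (C * (r2 - r1)) - 1)
        ≤ (GR + T * p) * (C * (r2 - r1) * Real.exp (C * T)) :=
      mul_le_mul_of_nonneg_left hexp hGRTp
    have h3 : (GR + T * p) * (C * (r2 - r1) * Real.exp (C * T)) = K * r2 - K * r1 := by
      rw [hK]; ring
    linarith [hkey, h2]
  constructor
  · intro r1 hr1 r2 hr2 h12
    simp only
    rw [hreal r1 hr1, hreal r2 hr2, ← EReal.coe_sub, ← EReal.coe_sub,
      EReal.coe_le_coe_iff]
    have h := hmono r1 hr1 r2 hr2 h12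
    calc g r2 - C * Real.exp (C * T) * (GR + T * p) * r2 = g r2 - K * r2 := by rw [hK]
      _ ≤ g r1 - K * r1 := h
      _ = g r1 - C * Real.exp (C * T) * (GR + T * p) * r1 := by rw [hK]
  · have hMono : MonotoneOn (fun r => K * r - g r) (Ioo (0:ℝ) (T - t)) := by
      intro r1 hr1 r2 hr2 h12
      have h := hmono r1 hr1 r2 hr2 h12
      simp only
      linarith
    have hae := hMono.ae_differentiableWithinAt measurableSet_Ioo
    filter_upwards [hae, ae_restrict_mem measurableSet_Ioo] with r hd hr
    have hdAt : DifferentiableAt ℝ (fun r => K * r - g r) r :=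
      hd.differentiableAt (isOpen_Ioo.mem_nhds hr)
    have H1 : HasDerivAt (fun s => K * s) K r := by
      simpa using (hasDerivAt_id r).const_mul K
    have H2 : HasDerivAt (fun s => K * s - g s) (deriv (fun s => K * s - g s) r) r :=
      hdAt.hasDerivAt
    have H3 : HasDerivAt (fun s => K * s - (K * s - g s))
        (K - deriv (fun s => K * s - g s) r) r := H1.sub H2
    have heq : (fun s => K * s - (K * s - g s)) = g := by funext s; ring
    rw [heq] at H3
    exact ⟨_, H3⟩
end
end

section
/- (A priori energy bound from the energy-dissipation balance) Let V be a real Banach space, T > 0, E : [0,T] × V → (0,+∞] an energy family with time-independent domain D, such that for u ∈ D the map t ↦ E_t(u) is differentiable on (0,T) with |∂_t E_t(u)| ≤ C_T·E_t(u), let Ψ_u : V → [0,∞) be dissipation potentials with nonnegative conjugates Ψ_u* ≥ 0, and let B : [0,T] × V → V* satisfy Ψ_u*(B(t,u)) ≤ C_B·E_t(u) for all t and u ∈ D. Suppose u ∈ AC([0,T];V) takes values in D, ξ : (0,T) → V* is strongly measurable with r ↦ ∂_r E_r(u(r)) integrable, and for every s ∈ [0,T] the energy-dissipation balance holds: E_s(u(s))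 + ∫₀^s ( Ψ_{u(r)}(u'(r)) + Ψ*_{u(r)}(B(r,u(r)) − ξ(r)) ) dr = E_0(u(0)) + ∫₀^s ( ∂_r E_r(u(r)) + ⟨B(r,u(r)), u'(r)⟩ ) dr. Then E_t(u(t)) ≤ E_0(u(0))·e^{(C_T + C_B)·t} for all t ∈ [0,T]. -/
open MeasureTheory Filter Topology Set

noncomputable section

variable {V : Type*} [NormedAddCommGroup V] [NormedSpace ℝ V]

/-- **A priori energy bound from the energy-dissipation balance** (Section 3.2 of the paper).
If the power is controlled by the energy (`|∂ₜ E_t(u)| ≤ C_T E_t(u)`), the perturbation is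
controlled by the energy (`Ψ*_u(B(t,u)) ≤ C_B E_t(u)`), and the absolutely continuous curve
`u` with values in `D` satisfies the energy-dissipation balance with some selection `ξ`,
then `E_t(u(t)) ≤ E_0(u(0)) exp((C_T + C_B) t)` on `[0,T]`. -/
theorem apriori_energy_bound [CompleteSpace V]
    (T : ℝ) (hT : 0 < T)
    (E : ℝ → V → ℝ) (D : Set V) (Edot : ℝ → V → ℝ)
    (CT CB : ℝ) (hCT : 0 < CT) (hCB : 0 < CB)
    (hpos : ∀ t ∈ Icc (0:ℝ) T, ∀ u ∈ D, 0 < E t u)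
    (hEdiff : ∀ u ∈ D, ∀ t ∈ Ioo (0:ℝ) T, HasDerivAt (fun s => E s u) (Edot t u) t)
    (hEdot : ∀ u ∈ D, ∀ t ∈ Ioo (0:ℝ) T, |Edot t u| ≤ CT * E t u)
    (Ψ : V → V → ℝ)
    (hΨ : ∀ u : V, LowerSemicontinuous (Ψ u) ∧ ConvexOn ℝ univ (Ψ u) ∧ Ψ u 0 = 0 ∧
      ∀ v : V, 0 ≤ Ψ u v)
    (hΨstar : ∀ (u : V) (ξ : StrongDual ℝ V), 0 ≤ conjFn (Ψ u) ξ)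
    (B : ℝ → V → StrongDual ℝ V)
    (hB : ∀ t ∈ Icc (0:ℝ) T, ∀ u ∈ D, conjFn (Ψ u) (B t u) ≤ ((CB * E t u : ℝ) : EReal))
    (u : ℝ → V) (u' : ℝ → V)
    (hu'int : IntegrableOn u' (Ioc 0 T))
    (hAC : ∀ t ∈ Icc (0:ℝ) T, u t = u 0 + ∫ r in (0:ℝ)..t, u' r)
    (hD : ∀ t ∈ Icc (0:ℝ) T, u t ∈ D)
    (ξ : ℝ → StrongDual ℝ V) (hξm : StronglyMeasurable ξ)
    (hEdotint : IntegrableOn (fun r => Edot r (u r)) (Ioc 0 T))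
    (q : ℝ → ℝ)
    (hq : ∀ᵐ r ∂(volume.restrict (Ioc 0 T)),
      conjFn (Ψ (u r)) (B r (u r) - ξ r) = ((q r : ℝ) : EReal))
    (hqint : IntegrableOn q (Ioc 0 T))
    (hΨint : IntegrableOn (fun r => Ψ (u r) (u' r)) (Ioc 0 T))
    (hpair : IntegrableOn (fun r => (B r (u r)) (u' r)) (Ioc 0 T))
    (hEDB : ∀ s ∈ Icc (0:ℝ) T,
      E s (u s) + ∫ r in (0:ℝ)..s, (Ψ (u r) (u' r) + q r)
        = E 0 (u 0) + ∫ r in (0:ℝ)..s, (Edot r (u r) + (B r (u r)) (u' r))) :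
    ∀ t ∈ Icc (0:ℝ) T, E t (u t) ≤ E 0 (u 0) * Real.exp ((CT + CB) * t) := by
  set K := CT + CB with hKdef
  have hK0 : 0 < K := by positivity
  set f : ℝ → ℝ := fun r => E r (u r) with hfdef
  set g : ℝ → ℝ := fun r =>
    (Edot r (u r) + (B r (u r)) (u' r)) - (Ψ (u r) (u' r) + q r) with hgdef
  have hint1 : IntegrableOn (fun r => Ψ (u r) (u' r) + q r) (Ioc 0 T) := hΨint.add hqint
  have hint2 : IntegrableOn (fun r => Edot r (u r) + (B r (u r)) (u' r)) (Ioc 0 T) :=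
    hEdotint.add hpair
  have hgint : IntegrableOn g (Ioc 0 T) := hint2.sub hint1
  -- Step 1 : f s = f 0 + ∫ g
  have step1 : ∀ s ∈ Icc (0:ℝ) T, f s = f 0 + ∫ r in (0:ℝ)..s, g r := by
    intro s hs
    have h1 : IntervalIntegrable (fun r => Ψ (u r) (u' r) + q r) volume 0 s :=
      (intervalIntegrable_iff_integrableOn_Ioc_of_le hs.1).2
        (hint1.mono_set (Ioc_subset_Ioc_right hs.2))
    have h2 : IntervalIntegrable (fun r => Edot r (u r) + (B r (u r)) (u' r)) volume 0 s :=
      (intervalIntegrable_iff_integrableOn_Ioc_of_le hs.1).2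
        (hint2.mono_set (Ioc_subset_Ioc_right hs.2))
    have := hEDB s hs
    have hsub : ∫ r in (0:ℝ)..s, g r =
        (∫ r in (0:ℝ)..s, (Edot r (u r) + (B r (u r)) (u' r)))
          - ∫ r in (0:ℝ)..s, (Ψ (u r) (u' r) + q r) :=
      intervalIntegral.integral_sub h2 h1
    simp only [hfdef]
    linarith [this, hsub]
  -- continuity of f on [0,T]
  have hgiT : IntervalIntegrable g volume 0 T :=
    (intervalIntegrable_iff_integrableOn_Ioc_of_le hT.le).2 hgint
  have hfc : ContinuousOn f (Icc 0 T) := by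
    have hc : ContinuousOn (fun s => f 0 + ∫ r in (0:ℝ)..s, g r) (Icc 0 T) := by
      have := intervalIntegral.continuousOn_primitive_interval' hgiT
        (a := 0) (by rw [uIcc_of_le hT.le]; exact left_mem_Icc.2 hT.le)
      rw [uIcc_of_le hT.le] at this
      exact continuousOn_const.add this
    exact ContinuousOn.congr hc step1
  have hfpos : ∀ s ∈ Icc (0:ℝ) T, 0 < f s := fun s hs => hpos s hs _ (hD s hs)
  have hfint : IntegrableOn f (Ioc 0 T) :=
    (hfc.integrableOn_Icc).mono_set Ioc_subset_Icc_self
  -- a.e. bound  g ≤ K f  on Ioc 0 T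
  have hq' : ∀ᵐ r : ℝ ∂volume, r ∈ Ioc 0 T →
      conjFn (Ψ (u r)) (B r (u r) - ξ r) = ((q r : ℝ) : EReal) :=
    (ae_restrict_iff' measurableSet_Ioc).1 hq
  have hTne : ∀ᵐ r : ℝ ∂volume, r ≠ T := by
    rw [ae_iff]
    convert Real.volume_singleton (a := T) using 2
    ext x; simp
  have hae : ∀ᵐ r : ℝ ∂volume, r ∈ Ioc 0 T → g r ≤ K * f r := by
    filter_upwards [hq', hTne] with r hqr hne hr
    have hrIcc : r ∈ Icc (0:ℝ) T := Ioc_subset_Icc_self hr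
    have hrIoo : r ∈ Ioo (0:ℝ) T := ⟨hr.1, lt_of_le_of_ne hr.2 hne⟩
    have huD : u r ∈ D := hD r hrIcc
    have hq0 : 0 ≤ q r := by
      have := hΨstar (u r) (B r (u r) - ξ r)
      rw [hqr hr] at this
      exact_mod_cast this
    have hpairb : (B r (u r)) (u' r) - Ψ (u r) (u' r) ≤ CB * E r (u r) := by
      have hle : (((B r (u r)) (u' r) - Ψ (u r) (u' r) : ℝ) : EReal)
          ≤ ((CB * E r (u r) : ℝ) : EReal) :=
        le_trans (le_iSup (fun v : V => (((B r (u r)) v - Ψ (u r) v : ℝ) : EReal)) (u' r))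
          (hB r hrIcc (u r) huD)
      exact_mod_cast hle
    have hEd : Edot r (u r) ≤ CT * E r (u r) :=
      (abs_le.1 (hEdot (u r) huD r hrIoo)).2
    simp only [hgdef, hfdef, hKdef]
    have hΨ0 : 0 ≤ Ψ (u r) (u' r) := (hΨ (u r)).2.2.2 (u' r)
    nlinarith
  -- Step 2 : f s ≤ F s := f 0 + K * ∫ f
  set F : ℝ → ℝ := fun s => f 0 + K * ∫ r in (0:ℝ)..s, f r with hFdef
  have key : ∀ s ∈ Icc (0:ℝ) T, f s ≤ F s := by
    intro s hs
    have hmono : ∫ r in (0:ℝ)..s, g r ≤ ∫ r in (0:ℝ)..s, K * f r := by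
      rw [intervalIntegral.integral_of_le hs.1, intervalIntegral.integral_of_le hs.1]
      refine setIntegral_mono_ae_restrict
        (hgint.mono_set (Ioc_subset_Ioc_right hs.2))
        (((hfint.mono_set (Ioc_subset_Ioc_right hs.2))).const_mul K) ?_
      filter_upwards [ae_restrict_of_ae hae, ae_restrict_mem measurableSet_Ioc] with r h1 h2
      exact h1 (Ioc_subset_Ioc_right hs.2 h2)
    have := step1 s hs
    rw [this, hFdef]
    simp only
    rw [← intervalIntegral.integral_const_mul]
    linarith
  -- Gronwall on F
  have hfiT : IntervalIntegrable f volume 0 T :=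
    (intervalIntegrable_iff_integrableOn_Ioc_of_le hT.le).2 hfint
  have hFc : ContinuousOn F (Icc 0 T) := by
    have := intervalIntegral.continuousOn_primitive_interval' hfiT
      (a := 0) (by rw [uIcc_of_le hT.le]; exact left_mem_Icc.2 hT.le)
    rw [uIcc_of_le hT.le] at this
    exact continuousOn_const.add (this.const_smul K)
  have hFderiv : ∀ x ∈ Ico (0:ℝ) T, HasDerivWithinAt F (K * f x) (Ici x) x := by
    intro x hx
    have hmem : Icc (0:ℝ) T ∈ 𝓝[>] x := by
      have h1 : Ioi x ∩ Iio T ∈ 𝓝[>] x :=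
        inter_mem_nhdsWithin (Ioi x) (Iio_mem_nhds hx.2)
      refine mem_of_superset h1 ?_
      rintro r ⟨hr1, hr2⟩
      exact ⟨le_trans hx.1 (le_of_lt hr1), le_of_lt hr2⟩
    have hcw : ContinuousWithinAt f (Ioi x) x := by
      have : ContinuousWithinAt f (Icc 0 T) x :=
        hfc x ⟨hx.1, hx.2.le⟩
      exact this.mono_of_mem_nhdsWithin hmem
    have hms : StronglyMeasurableAtFilter f (𝓝[>] x) volume :=
      ⟨Icc 0 T, hmem, hfc.aestronglyMeasurable measurableSet_Icc⟩
    have hii : IntervalIntegrable f volume 0 x :=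
      (intervalIntegrable_iff_integrableOn_Ioc_of_le hx.1).2
        (hfint.mono_set (Ioc_subset_Ioc_right hx.2.le))
    have hI : HasDerivWithinAt (fun s => ∫ r in (0:ℝ)..s, f r) (f x) (Ici x) x :=
      intervalIntegral.integral_hasDerivWithinAt_right hii hms hcw
    exact (hI.const_mul K).const_add (f 0)
  have hF0 : ‖F 0‖ ≤ f 0 := by
    have : F 0 = f 0 := by simp [hFdef]
    rw [this, Real.norm_eq_abs, abs_of_pos (hfpos 0 (left_mem_Icc.2 hT.le))]
  have hbd : ∀ x ∈ Ico (0:ℝ) T, ‖K * f x‖ ≤ K * ‖F x‖ + 0 := by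
    intro x hx
    have hxI : x ∈ Icc (0:ℝ) T := ⟨hx.1, hx.2.le⟩
    have h1 : 0 < f x := hfpos x hxI
    have h2 : f x ≤ F x := key x hxI
    rw [Real.norm_eq_abs, abs_of_pos (by positivity), Real.norm_eq_abs, add_zero]
    calc K * f x ≤ K * F x := by nlinarith
    _ ≤ K * |F x| := by nlinarith [le_abs_self (F x)]
  have hG := norm_le_gronwallBound_of_norm_deriv_right_le hFc hFderiv hF0 hbd
  intro t ht
  have := hG t ht
  rw [gronwallBound_ε0, sub_zero] at this
  calc E t (u t) = f t := rfl
  _ ≤ F t := key t ht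
  _ ≤ ‖F t‖ := le_abs_self _
  _ ≤ f 0 * Real.exp (K * t) := this
  _ = E 0 (u 0) * Real.exp ((CT + CB) * t) := rfl
end
end

section
/- (Liminf estimate for the dissipation integrals under strong Γ-convergence) Let V be a real Banach space, T > 0, K ⊂ V, g : [0,∞) → [0,∞) superlinear (g(s)/s → ∞ as s → ∞), and ω a modulus of continuity. For each ε ∈ [0,1] let Ψ^ε assign to each w ∈ V a lower semicontinuous convex functional Ψ^ε_w : V → [0,∞) with Ψ^ε_w(0) = 0, and assume: (uniform continuity) |Ψ^ε_{w₁}(v) − Ψ^ε_{w₂}(v)| ≤ ω(‖w₁−w₂‖)·g(‖v‖) for all ε ∈ [0,1], w₁, w₂ ∈ K and v ∈ V; (strong Γ-convergence) whenever ε_k → 0 and w_k → w with w_k, w ∈ K, the functionals Ψ^{ε_k}_{w_k} Γ-converge to Ψ⁰_w in the strong topology of V. Let ε_k → 0 and let u_k, u₀ ∈ W^{1,1}(0,T;V) take values in K and satisfy: (a) sup_{t∈[0,T]} ‖u_k(t) − u₀(t)‖ → 0 as k → ∞; (b) u'_k ⇀ u'₀ weakly in L¹(0,T;V); (c) ∫₀ᵀ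 g(‖u'_k(t)‖) dt ≤ C_g for all k. Then ∫₀ᵀ Ψ⁰_{u₀(t)}(u'₀(t)) dt ≤ liminf_{k→∞} ∫₀ᵀ Ψ^{ε_k}_{u_k(t)}(u'_k(t)) dt. -/
open MeasureTheory Filter Topology Set
open scoped ENNReal NNReal

noncomputable section

namespace LiminfDissipAux

variable {V : Type*} [NormedAddCommGroup V] [NormedSpace ℝ V]

/-- Composition along a measurable map with countable range is measurable. -/
lemma measurable_comp_countable {γ : Type*} [MeasurableSpace γ]
    {κ : ℝ → ℝ} (hκ : Measurable κ) (hc : (Set.range κ).Countable)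
    {H : ℝ → ℝ → γ} (hH : ∀ v, Measurable (H v)) :
    Measurable fun t => H (κ t) t := by
  intro B hB
  have heq : (fun t => H (κ t) t) ⁻¹' B
      = ⋃ v ∈ Set.range κ, κ ⁻¹' {v} ∩ H v ⁻¹' B := by
    ext t
    simp only [mem_preimage, mem_iUnion, mem_inter_iff, mem_singleton_iff]
    constructor
    · intro h
      exact ⟨κ t, ⟨t, rfl⟩, rfl, h⟩
    · rintro ⟨v, -, rfl, h⟩
      exact h
  rw [heq]
  exact MeasurableSet.biUnion hc fun v _ =>
    (hκ (measurableSet_singleton v)).inter (hH v hB)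

/-- Every convex lower semicontinuous function admits an affine minorant which is
`ρ`-close to the function value at a prescribed point. -/
lemma exists_affine_minorant {φ : V → ℝ} (hconv : ConvexOn ℝ Set.univ φ)
    (hlsc : LowerSemicontinuous φ) (x : V) {ρ : ℝ} (hρ : 0 < ρ) :
    ∃ (ξ : V →L[ℝ] ℝ) (c : ℝ), (∀ v, c + ξ v ≤ φ v) ∧ φ x - ρ ≤ c + ξ x := by
  set S : Set (V × ℝ) := {p : V × ℝ | φ p.1 ≤ p.2} with hS
  have hepi : IsClosed S := by
    rw [← isOpen_compl_iff, isOpen_iff_mem_nhds]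
    rintro ⟨x₀, a⟩ hp
    simp only [hS, mem_compl_iff, mem_setOf_eq, not_le] at hp
    obtain ⟨y, hy1, hy2⟩ := exists_between hp
    have hU : {z : V | y < φ z} ∈ 𝓝 x₀ := hlsc x₀ y hy2
    rw [nhds_prod_eq]
    refine mem_of_superset (prod_mem_prod hU (Iio_mem_nhds hy1)) ?_
    rintro ⟨z, b⟩ ⟨hz, hb⟩
    simp only [hS, mem_compl_iff, mem_setOf_eq, not_le]
    exact lt_trans hb hz
  have hcon : Convex ℝ S := by
    have h := hconv.convex_epigraph
    have : {p : V × ℝ | p.1 ∈ Set.univ ∧ φ p.1 ≤ p.2} = S := by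
      ext p; simp [hS]
    rwa [this] at h
  have hnot : (x, φ x - ρ) ∉ S := by
    simp only [hS, mem_setOf_eq, not_le]
    linarith
  obtain ⟨f, u, hfu, hux⟩ := geometric_hahn_banach_closed_point hcon hepi hnot
  set β : ℝ := f (0, 1) with hβdef
  have hsplit : ∀ (v : V) (a : ℝ), f (v, a) = f (v, 0) + a * β := by
    intro v a
    have h1 : (v, a) = (v, (0:ℝ)) + ((0:V), a) := by simp
    have h2 : ((0:V), a) = a • ((0:V), (1:ℝ)) := by simp
    rw [h1, map_add, h2, f.map_smul, smul_eq_mul]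
  have hmemx : (x, φ x) ∈ S := by simp [hS]
  have h1x : f (x, φ x) < u := hfu _ hmemx
  have h2x : u < f (x, φ x - ρ) := hux
  rw [hsplit] at h1x h2x
  have hβneg : β < 0 := by nlinarith
  have hβne : β ≠ 0 := ne_of_lt hβneg
  refine ⟨(-β⁻¹) • f.comp (ContinuousLinearMap.inl ℝ V ℝ), u / β, ?_, ?_⟩
  · intro v
    have h1 : f (v, φ v) < u := hfu _ (by simp [hS])
    rw [hsplit] at h1
    have hval : u / β + ((-β⁻¹) • f.comp (ContinuousLinearMap.inl ℝ V ℝ)) v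
        = (u - f (v, 0)) / β := by
      simp only [ContinuousLinearMap.smul_apply, ContinuousLinearMap.comp_apply,
        ContinuousLinearMap.inl_apply, smul_eq_mul]
      field_simp
      ring
    rw [hval, div_le_iff_of_neg hβneg]
    nlinarith
  · have hval : u / β + ((-β⁻¹) • f.comp (ContinuousLinearMap.inl ℝ V ℝ)) x
        = (u - f (x, 0)) / β := by
      simp only [ContinuousLinearMap.smul_apply, ContinuousLinearMap.comp_apply,
        ContinuousLinearMap.inl_apply, smul_eq_mul]
      field_simp
      ring
    rw [hval, le_div_iff_of_neg hβneg]
    nlinarith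

lemma ofReal_integral_le_lintegral {X : Type*} [MeasurableSpace X] {μ : Measure X}
    {h : X → ℝ} (hi : Integrable h μ) :
    ENNReal.ofReal (∫ t, h t ∂μ) ≤ ∫⁻ t, ENNReal.ofReal (h t) ∂μ := by
  have h1 : ∫ t, h t ∂μ ≤ ∫ t, max (h t) 0 ∂μ :=
    integral_mono hi hi.pos_part fun t => le_max_left _ _
  have h2 : ENNReal.ofReal (∫ t, max (h t) 0 ∂μ) = ∫⁻ t, ENNReal.ofReal (max (h t) 0) ∂μ :=
    ofReal_integral_eq_lintegral_ofReal hi.pos_part (ae_of_all _ fun t => le_max_right _ _)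
  have h3 : ∀ t, ENNReal.ofReal (max (h t) 0) = ENNReal.ofReal (h t) := by
    intro t
    rcases le_total (h t) 0 with ht | ht
    · rw [max_eq_right ht, ENNReal.ofReal_zero, ENNReal.ofReal_of_nonpos ht]
    · rw [max_eq_left ht]
  calc ENNReal.ofReal (∫ t, h t ∂μ) ≤ ENNReal.ofReal (∫ t, max (h t) 0 ∂μ) :=
        ENNReal.ofReal_le_ofReal h1
    _ = ∫⁻ t, ENNReal.ofReal (max (h t) 0) ∂μ := h2
    _ = ∫⁻ t, ENNReal.ofReal (h t) ∂μ := by simp_rw [h3]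

/-- Jensen's inequality for the lower integral of a convex lsc function. -/
lemma jensen_lintegral [CompleteSpace V] {φ : V → ℝ} (hconv : ConvexOn ℝ Set.univ φ)
    (hlsc : LowerSemicontinuous φ)
    {s : Set ℝ} {ℓ : ℝ} (hℓ : 0 < ℓ)
    (hμs : volume s = ENNReal.ofReal ℓ)
    {u : ℝ → V} (hu : IntegrableOn u s) :
    ENNReal.ofReal (ℓ * φ (ℓ⁻¹ • ∫ t in s, u t)) ≤ ∫⁻ t in s, ENNReal.ofReal (φ (u t)) := by
  haveI : IsFiniteMeasure (volume.restrict s) := by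
    constructor
    rw [Measure.restrict_apply_univ, hμs]
    exact ENNReal.ofReal_lt_top
  set x : V := ℓ⁻¹ • ∫ t in s, u t with hx
  have key : ∀ ρ : ℝ, 0 < ρ →
      ENNReal.ofReal (ℓ * (φ x - ρ)) ≤ ∫⁻ t in s, ENNReal.ofReal (φ (u t)) := by
    intro ρ hρ
    obtain ⟨ξ, c, hmin, hxmin⟩ := exists_affine_minorant hconv hlsc x hρ
    have hξint : Integrable (fun t => ξ (u t)) (volume.restrict s) := ξ.integrable_comp hu
    have hint : Integrable (fun t => c + ξ (u t)) (volume.restrict s) :=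
      (integrable_const c).add hξint
    have hval : ∫ t in s, (c + ξ (u t)) = ℓ * (c + ξ x) := by
      rw [integral_add (integrable_const c) hξint, integral_const,
        ξ.integral_comp_comm hu]
      have hmeas : (volume.restrict s) Set.univ = ENNReal.ofReal ℓ := by
        rw [Measure.restrict_apply_univ, hμs]
      rw [measureReal_def, hmeas]
      have hξx : ξ x = ℓ⁻¹ * ξ (∫ t in s, u t) := by
        rw [hx, ξ.map_smul, smul_eq_mul]
      rw [hξx, ENNReal.toReal_ofReal hℓ.le, smul_eq_mul]
      field_simp
    calc ENNReal.ofReal (ℓ * (φ x - ρ))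
        ≤ ENNReal.ofReal (∫ t in s, (c + ξ (u t))) := by
          apply ENNReal.ofReal_le_ofReal
          rw [hval]
          have := hxmin
          nlinarith
      _ ≤ ∫⁻ t in s, ENNReal.ofReal (c + ξ (u t)) := ofReal_integral_le_lintegral hint
      _ ≤ ∫⁻ t in s, ENNReal.ofReal (φ (u t)) :=
          lintegral_mono fun t => ENNReal.ofReal_le_ofReal (hmin (u t))
  have hlim : Tendsto (fun ρ : ℝ => ENNReal.ofReal (ℓ * (φ x - ρ))) (𝓝[>] 0)
      (𝓝 (ENNReal.ofReal (ℓ * φ x))) := by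
    have h1 : Tendsto (fun ρ : ℝ => ℓ * (φ x - ρ)) (𝓝 0) (𝓝 (ℓ * (φ x - 0))) :=
      (tendsto_const_nhds.sub tendsto_id).const_mul ℓ
    rw [sub_zero] at h1
    exact (ENNReal.continuous_ofReal.tendsto _).comp (h1.mono_left nhdsWithin_le_nhds)
  exact le_of_tendsto hlim (eventually_mem_nhdsWithin.mono fun ρ hρ => key ρ hρ)

/-- Transfer a lower bound via eventual approximate bounds into an `ℝ≥0∞` liminf bound. -/
lemma ofReal_le_liminf_of_eventually {b : ℕ → ℝ} {P c : ℝ} (hc : 0 ≤ c)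
    (hb : ∀ ρ : ℝ, 0 < ρ → ∀ᶠ k in atTop, P - ρ < b k) :
    ENNReal.ofReal (c * P) ≤ Filter.liminf (fun k => ENNReal.ofReal (c * b k)) atTop := by
  have key : ∀ ρ : ℝ, 0 < ρ → ENNReal.ofReal (c * (P - ρ))
      ≤ Filter.liminf (fun k => ENNReal.ofReal (c * b k)) atTop := by
    intro ρ hρ
    apply le_liminf_of_le (by isBoundedDefault)
    filter_upwards [hb ρ hρ] with k hk
    exact ENNReal.ofReal_le_ofReal (mul_le_mul_of_nonneg_left hk.le hc)
  have hlim : Tendsto (fun ρ : ℝ => ENNReal.ofReal (c * (P - ρ))) (𝓝[>] 0)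
      (𝓝 (ENNReal.ofReal (c * P))) := by
    have h1 : Tendsto (fun ρ : ℝ => c * (P - ρ)) (𝓝 0) (𝓝 (c * (P - 0))) :=
      (tendsto_const_nhds.sub tendsto_id).const_mul c
    rw [sub_zero] at h1
    exact (ENNReal.continuous_ofReal.tendsto _).comp (h1.mono_left nhdsWithin_le_nhds)
  exact le_of_tendsto hlim (eventually_mem_nhdsWithin.mono fun ρ hρ => key ρ hρ)

lemma eventually_of_ereal_liminf {a : ℝ} {b : ℕ → ℝ}
    (h : (a : EReal) ≤ Filter.liminf (fun k => ((b k : ℝ) : EReal)) atTop)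
    {ρ : ℝ} (hρ : 0 < ρ) : ∀ᶠ k in atTop, a - ρ < b k := by
  have h2 : ((a - ρ : ℝ) : EReal) < Filter.liminf (fun k => ((b k : ℝ) : EReal)) atTop :=
    lt_of_lt_of_le (by exact_mod_cast sub_lt_self a hρ) h
  filter_upwards [eventually_lt_of_lt_liminf h2] with k hk
  exact_mod_cast hk

lemma ofReal_le_liminf_ofReal {a : ℝ} {b : ℕ → ℝ}
    (h : (a : EReal) ≤ Filter.liminf (fun k => ((b k : ℝ) : EReal)) atTop) :
    ENNReal.ofReal a ≤ Filter.liminf (fun k => ENNReal.ofReal (b k)) atTop := by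
  have := ofReal_le_liminf_of_eventually (c := 1) zero_le_one
    (fun ρ hρ => eventually_of_ereal_liminf h hρ)
  simpa using this

lemma liminf_add_liminf_le {a b : ℕ → ℝ≥0∞} :
    Filter.liminf a atTop + Filter.liminf b atTop
      ≤ Filter.liminf (fun k => a k + b k) atTop := by
  rw [Filter.liminf_eq_iSup_iInf_of_nat, Filter.liminf_eq_iSup_iInf_of_nat,
    Filter.liminf_eq_iSup_iInf_of_nat,
    ENNReal.iSup_add_iSup_of_monotone (f := fun n => ⨅ i ≥ n, a i)
      (g := fun n => ⨅ i ≥ n, b i)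
      (fun n m hnm => le_iInf₂ fun i hi => iInf₂_le i (le_trans hnm hi))
      (fun n m hnm => le_iInf₂ fun i hi => iInf₂_le i (le_trans hnm hi))]
  apply iSup_mono
  intro n
  exact le_iInf₂ fun i hi => add_le_add (iInf₂_le i hi) (iInf₂_le i hi)

lemma finset_sum_liminf_le {A : ℕ → ℕ → ℝ≥0∞} (s : Finset ℕ) :
    (∑ j ∈ s, Filter.liminf (fun k => A j k) atTop)
      ≤ Filter.liminf (fun k => ∑ j ∈ s, A j k) atTop := by
  classical
  induction s using Finset.induction with
  | empty => simp
  | @insert j s hj ih =>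
      rw [Finset.sum_insert hj]
      refine le_trans (add_le_add le_rfl ih) ?_
      refine le_trans liminf_add_liminf_le ?_
      apply Filter.liminf_le_liminf ?_ (by isBoundedDefault) (by isBoundedDefault)
      filter_upwards with k
      rw [Finset.sum_insert hj]

lemma tsum_liminf_le {A : ℕ → ℕ → ℝ≥0∞} :
    (∑' j, Filter.liminf (fun k => A j k) atTop)
      ≤ Filter.liminf (fun k => ∑' j, A j k) atTop := by
  rw [ENNReal.tsum_eq_iSup_sum]
  refine iSup_le fun s => ?_
  refine le_trans (finset_sum_liminf_le s) (Filter.liminf_le_liminf ?_)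
  filter_upwards with k
  exact ENNReal.sum_le_tsum s

lemma liminf_add_const_le {a : ℕ → ℝ≥0∞} {c : ℝ≥0∞} :
    Filter.liminf (fun k => a k + c) atTop ≤ Filter.liminf a atTop + c := by
  set L := Filter.liminf a atTop with hL
  apply ENNReal.le_of_forall_pos_le_add
  intro ε hε hlt
  have hLlt : L < ⊤ := lt_of_le_of_lt le_self_add hlt
  have hfreq : ∃ᶠ k in atTop, a k < L + ε := by
    have : L < L + ε := ENNReal.lt_add_right hLlt.ne (by exact_mod_cast hε.ne')
    exact Filter.frequently_lt_of_liminf_lt (by isBoundedDefault) this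
  have : ∃ᶠ k in atTop, a k + c ≤ L + ε + c := by
    refine hfreq.mono fun k hk => ?_
    exact add_le_add hk.le le_rfl
  calc Filter.liminf (fun k => a k + c) atTop ≤ L + ε + c :=
        Filter.liminf_le_of_frequently_le this (by isBoundedDefault)
    _ = L + c + ε := by ring


end LiminfDissipAux

variable {V : Type*} [NormedAddCommGroup V] [NormedSpace ℝ V]

set_option maxHeartbeats 2000000 in
/-- **Liminf estimate for the dissipation integrals under strong Γ-convergence**
(the key step in the proof of Corollary 3.4). If the state-dependent dissipation
potentials `Ψ^ε_w` are uniformly continuous in the state `w ∈ K` (with modulus `ω` and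
superlinear gauge `g`) and Γ-converge strongly to `Ψ⁰_w`, and if `u_k → u₀` uniformly with
`u'_k ⇀ u'₀` weakly in `L¹(0,T;V)` and equi-integrability `∫ g(‖u'_k‖) ≤ C_g`, then
`∫₀ᵀ Ψ⁰_{u₀}(u'₀) ≤ liminf ∫₀ᵀ Ψ^{ε_k}_{u_k}(u'_k)`. -/
theorem liminf_dissipation_of_strong_gamma [CompleteSpace V]
    (T : ℝ) (hT : 0 < T) (K : Set V)
    (g : ℝ → ℝ) (hg0 : ∀ s, 0 ≤ g s)
    (hgsup : Tendsto (fun s => g s / s) atTop atTop)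
    (ω : ℝ → ℝ) (hωcont : Continuous ω) (hωmono : Monotone ω) (hω0 : ω 0 = 0)
    (hωnonneg : ∀ s, 0 ≤ ω s)
    (Ψ : ℝ → V → V → ℝ)
    (hΨ : ∀ ε ∈ Icc (0:ℝ) 1, ∀ w : V, LowerSemicontinuous (Ψ ε w) ∧
      ConvexOn ℝ univ (Ψ ε w) ∧ Ψ ε w 0 = 0 ∧ ∀ v : V, 0 ≤ Ψ ε w v)
    (hunif : ∀ ε ∈ Icc (0:ℝ) 1, ∀ w₁ ∈ K, ∀ w₂ ∈ K, ∀ v : V,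
      |Ψ ε w₁ v - Ψ ε w₂ v| ≤ ω ‖w₁ - w₂‖ * g ‖v‖)
    (hgamma : ∀ (εk : ℕ → ℝ) (wk : ℕ → V) (w : V),
      (∀ k, εk k ∈ Icc (0:ℝ) 1) → Tendsto εk atTop (𝓝 0) →
      (∀ k, wk k ∈ K) → w ∈ K → Tendsto wk atTop (𝓝 w) →
      (∀ (v : V) (vk : ℕ → V), Tendsto vk atTop (𝓝 v) →
        ((Ψ 0 w v : ℝ) : EReal) ≤
          Filter.liminf (fun k => ((Ψ (εk k) (wk k) (vk k) : ℝ) : EReal)) atTop)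
      ∧ ∀ v : V, ∃ vk : ℕ → V, Tendsto vk atTop (𝓝 v) ∧
          Tendsto (fun k => Ψ (εk k) (wk k) (vk k)) atTop (𝓝 (Ψ 0 w v)))
    (εk : ℕ → ℝ) (hεk : ∀ k, εk k ∈ Icc (0:ℝ) 1) (hεk0 : Tendsto εk atTop (𝓝 0))
    (uk : ℕ → ℝ → V) (u'k : ℕ → ℝ → V) (u0 : ℝ → V) (u'0 : ℝ → V)
    (hW11k : ∀ k, IntegrableOn (u'k k) (Ioc 0 T) ∧
      ∀ t ∈ Icc (0:ℝ) T, uk k t = uk k 0 + ∫ r in (0:ℝ)..t, u'k k r)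
    (hW110 : IntegrableOn u'0 (Ioc 0 T) ∧
      ∀ t ∈ Icc (0:ℝ) T, u0 t = u0 0 + ∫ r in (0:ℝ)..t, u'0 r)
    (hKk : ∀ k, ∀ t ∈ Icc (0:ℝ) T, uk k t ∈ K) (hK0 : ∀ t ∈ Icc (0:ℝ) T, u0 t ∈ K)
    (ha : TendstoUniformlyOn (fun k t => uk k t) u0 atTop (Icc (0:ℝ) T))
    (hb : ∀ η : ℝ → StrongDual ℝ V, StronglyMeasurable η →
      (∃ Cη : ℝ, ∀ t, ‖η t‖ ≤ Cη) →
      Tendsto (fun k => ∫ t in Ioc (0:ℝ) T, (η t) (u'k k t)) atTop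
        (𝓝 (∫ t in Ioc (0:ℝ) T, (η t) (u'0 t))))
    (Cg : ℝ)
    (hc : ∀ k, ∫⁻ t in Ioc (0:ℝ) T, ENNReal.ofReal (g ‖u'k k t‖) ≤ ENNReal.ofReal Cg) :
    ∫⁻ t in Ioc (0:ℝ) T, ENNReal.ofReal (Ψ 0 (u0 t) (u'0 t))
      ≤ Filter.liminf
          (fun k => ∫⁻ t in Ioc (0:ℝ) T, ENNReal.ofReal (Ψ (εk k) (uk k t) (u'k k t)))
          atTop := by
  classical
  letI : MeasurableSpace V := borel V
  haveI : BorelSpace V := ⟨rfl⟩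
  set S : Set ℝ := Ioc (0:ℝ) T with hSdef
  set L : ℝ≥0∞ := Filter.liminf
    (fun k => ∫⁻ t in S, ENNReal.ofReal (Ψ (εk k) (uk k t) (u'k k t))) atTop with hLdef
  -- mesh sizes
  set c : ℕ → ℝ := fun n => T / ((n:ℝ)+1) with hcdef
  have hcpos : ∀ n, 0 < c n := fun n => div_pos hT (by positivity)
  have hctend : Tendsto c atTop (𝓝 0) := by
    have h := tendsto_one_div_add_atTop_nhds_zero_nat.const_mul T
    rw [mul_zero] at h
    refine h.congr fun n => ?_
    rw [hcdef, mul_one_div]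
  have hcT : ∀ n : ℕ, ((n:ℝ)+1) * c n = T := by
    intro n
    rw [hcdef]
    field_simp
  -- the left-endpoint maps
  set κ : ℕ → ℝ → ℝ := fun n t => ((⌈t / c n⌉ - 1 : ℤ) : ℝ) * c n with hκdef
  have hκmono : ∀ n, Monotone (κ n) := by
    intro n a b hab
    have h1 : ⌈a / c n⌉ ≤ ⌈b / c n⌉ :=
      Int.ceil_le_ceil ((div_le_div_iff_of_pos_right (hcpos n)).mpr hab)
    have h2 : ((⌈a / c n⌉ - 1 : ℤ) : ℝ) ≤ ((⌈b / c n⌉ - 1 : ℤ) : ℝ) := by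
      exact_mod_cast sub_le_sub_right h1 1
    exact mul_le_mul_of_nonneg_right h2 (hcpos n).le
  have hκmeas : ∀ n, Measurable (κ n) := fun n => (hκmono n).measurable
  have hκcount : ∀ n, (Set.range (κ n)).Countable := by
    intro n
    have hsub : Set.range (κ n) ⊆ Set.range (fun z : ℤ => ((z - 1 : ℤ) : ℝ) * c n) := by
      rintro x ⟨t, rfl⟩
      exact ⟨⌈t / c n⌉, rfl⟩
    exact (Set.countable_range _).mono hsub
  have hκprop : ∀ n, ∀ t ∈ S, 0 ≤ κ n t ∧ κ n t < t ∧ t ≤ κ n t + c n ∧ κ n t + c n ≤ T := by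
    intro n t ht
    obtain ⟨ht0, htT⟩ := ht
    have hcp := hcpos n
    have hx1 : 0 < ⌈t / c n⌉ := Int.ceil_pos.mpr (div_pos ht0 hcp)
    have hx2 : ⌈t / c n⌉ ≤ (n : ℤ) + 1 := by
      apply Int.ceil_le.mpr
      push_cast
      rw [div_le_iff₀ hcp]
      calc t ≤ T := htT
        _ = ((n:ℝ)+1) * c n := (hcT n).symm
    have hle : t / c n ≤ (⌈t / c n⌉ : ℝ) := Int.le_ceil _
    have hlt : ((⌈t / c n⌉ : ℝ)) - 1 < t / c n := by
      have := Int.ceil_lt_add_one (t / c n)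
      linarith
    have hcast1 : (1:ℝ) ≤ (⌈t / c n⌉ : ℝ) := by exact_mod_cast hx1
    have hcast2 : ((⌈t / c n⌉ : ℝ)) ≤ (n:ℝ) + 1 := by exact_mod_cast hx2
    have hκval : κ n t = ((⌈t / c n⌉ : ℝ) - 1) * c n := by
      rw [hκdef]
      push_cast
      ring
    have htval : t = (t / c n) * c n := (div_mul_cancel₀ t hcp.ne').symm
    have hm1 : ((⌈t / c n⌉ : ℝ) - 1) * c n < (t / c n) * c n :=
      mul_lt_mul_of_pos_right hlt hcp
    have hm2 : (t / c n) * c n ≤ (⌈t / c n⌉ : ℝ) * c n :=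
      mul_le_mul_of_nonneg_right hle hcp.le
    have hm3 : ((⌈t / c n⌉ : ℝ)) * c n ≤ ((n:ℝ) + 1) * c n :=
      mul_le_mul_of_nonneg_right hcast2 hcp.le
    rw [hcT n] at hm3
    refine ⟨?_, ?_, ?_, ?_⟩
    · rw [hκval]
      exact mul_nonneg (by linarith) hcp.le
    · rw [hκval]
      linarith [hm1, htval.symm.le, htval.le]
    · rw [hκval]
      nlinarith
    · rw [hκval]
      nlinarith
  have hκeq : ∀ n (j : ℕ) t, t ∈ Ioc ((j:ℝ) * c n) (((j:ℝ)+1) * c n) → κ n t = (j:ℝ) * c n := by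
    intro n j t ht
    have hcp := hcpos n
    have hceil : ⌈t / c n⌉ = (j : ℤ) + 1 := by
      rw [Int.ceil_eq_iff]
      constructor
      · push_cast
        have h1 : (j:ℝ) < t / c n := by
          rw [lt_div_iff₀ hcp]
          exact ht.1
        linarith
      · push_cast
        rw [div_le_iff₀ hcp]
        exact ht.2
    rw [hκdef]
    simp only [hceil]
    push_cast
    ring
  -- continuity of the limit curve and the approximations
  have hprim : ∀ (f : ℝ → V), IntegrableOn f S →
      ContinuousOn (fun x => ∫ r in (0:ℝ)..x, f r) (Icc 0 T) := by
    intro f hf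
    have h1 : IntegrableOn f (Icc 0 T) := by
      rw [integrableOn_Icc_iff_integrableOn_Ioc]
      exact hf
    have h2 := intervalIntegral.continuousOn_primitive (μ := volume) h1
    refine h2.congr fun x hx => ?_
    rw [intervalIntegral.integral_of_le hx.1]
  have hu0cont : ContinuousOn u0 (Icc 0 T) := by
    refine (continuousOn_const.add (hprim u'0 hW110.1)).congr fun t ht => hW110.2 t ht
  have hukcont : ∀ k, ContinuousOn (uk k) (Icc 0 T) := fun k =>
    (continuousOn_const.add (hprim (u'k k) (hW11k k).1)).congr fun t ht => (hW11k k).2 t ht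
  have hptwise : ∀ x ∈ Icc (0:ℝ) T, Tendsto (fun k => uk k x) atTop (𝓝 (u0 x)) :=
    fun x hx => ha.tendsto_at hx
  -- increments are set integrals of the derivative
  have hdiff : ∀ (f : ℝ → V), IntegrableOn f S → ∀ (w : ℝ → V),
      (∀ t ∈ Icc (0:ℝ) T, w t = w 0 + ∫ r in (0:ℝ)..t, f r) →
      ∀ {a b : ℝ}, 0 ≤ a → a ≤ b → b ≤ T → w b - w a = ∫ t in Ioc a b, f t := by
    intro f hf w hw a b ha0 hab hbT
    have hint : ∀ x y : ℝ, 0 ≤ x → x ≤ y → y ≤ T → IntervalIntegrable f volume x y := by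
      intro x y hx hxy hyT
      rw [intervalIntegrable_iff_integrableOn_Ioc_of_le hxy]
      exact hf.mono_set (Ioc_subset_Ioc hx hyT)
    rw [hw b ⟨le_trans ha0 hab, hbT⟩, hw a ⟨ha0, le_trans hab hbT⟩]
    have h3 : w 0 + (∫ r in (0:ℝ)..b, f r) - (w 0 + ∫ r in (0:ℝ)..a, f r)
        = (∫ r in (0:ℝ)..b, f r) - ∫ r in (0:ℝ)..a, f r := by abel
    rw [h3, intervalIntegral.integral_interval_sub_left
      (hint 0 b le_rfl (le_trans ha0 hab) hbT) (hint 0 a le_rfl ha0 (le_trans hab hbT)),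
      intervalIntegral.integral_of_le hab]
  -- Lebesgue differentiation
  set ut : ℝ → V := S.indicator u'0 with hutdef
  have hutint : Integrable ut volume := by
    rw [hutdef, integrable_indicator_iff measurableSet_Ioc]
    exact hW110.1
  set m : ℕ → ℝ → V := fun n t => (c n)⁻¹ • (u0 (κ n t + c n) - u0 (κ n t)) with hmdef
  have hmtend : ∀ᵐ x ∂(volume.restrict S), Tendsto (fun n => m n x) atTop (𝓝 (u'0 x)) := by
    have hleb := IsUnifLocDoublingMeasure.ae_tendsto_average_norm_sub
      (μ := (volume : Measure ℝ)) hutint.locallyIntegrable 1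
    filter_upwards [ae_restrict_of_ae hleb, ae_restrict_mem measurableSet_Ioc] with x hx hxS
    have hδlim : Tendsto (fun n => c n / 2) atTop (𝓝[>] (0:ℝ)) := by
      rw [tendsto_nhdsWithin_iff]
      exact ⟨by simpa using hctend.div_const 2, Eventually.of_forall fun n => half_pos (hcpos n)⟩
    set w : ℕ → ℝ := fun n => κ n x + c n / 2 with hwdef
    have hmem : ∀ᶠ n in atTop, x ∈ Metric.closedBall (w n) (1 * (c n / 2)) := by
      filter_upwards with n
      obtain ⟨h0, hlt, hle, hT'⟩ := hκprop n x hxS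
      rw [one_mul, Real.closedBall_eq_Icc]
      constructor
      · show w n - c n / 2 ≤ x
        simp only [hwdef]
        linarith
      · show x ≤ w n + c n / 2
        simp only [hwdef]
        linarith
    have hx2 := hx w (fun n => c n / 2) hδlim hmem
    have key : ∀ n, ‖m n x - u'0 x‖ ≤ ⨍ y in Metric.closedBall (w n) (c n / 2), ‖ut y - ut x‖ := by
      intro n
      obtain ⟨h0, hlt, hle, hT'⟩ := hκprop n x hxS
      have hcp := hcpos n
      set a : ℝ := κ n x with hadef
      set b : ℝ := κ n x + c n with hbdef
      have hba : b - a = c n := by rw [hbdef, hadef]; ring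
      have hab : a ≤ b := by rw [hbdef]; linarith
      have hIocS : Ioc a b ⊆ S := fun y hy => ⟨lt_of_le_of_lt h0 hy.1, le_trans hy.2 hT'⟩
      have hm1 : u0 b - u0 a = ∫ t in Ioc a b, u'0 t := hdiff u'0 hW110.1 u0 hW110.2 h0 hab hT'
      have hm2 : (∫ t in Ioc a b, u'0 t) = ∫ t in Ioc a b, ut t :=
        setIntegral_congr_fun measurableSet_Ioc fun y hy => (indicator_of_mem (hIocS hy) u'0).symm
      have hutx : ut x = u'0 x := indicator_of_mem hxS u'0
      have hfinIoc : volume (Ioc a b) < ⊤ := by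
        rw [Real.volume_Ioc]
        exact ENNReal.ofReal_lt_top
      have hfinIcc : volume (Icc a b) < ⊤ := by
        rw [Real.volume_Icc]
        exact ENNReal.ofReal_lt_top
      have hbaH : IntegrableOn ut (Ioc a b) volume := hutint.integrableOn
      have hIccInt : IntegrableOn (fun y => ‖ut y - ut x‖) (Icc a b) volume :=
        ((hutint.integrableOn).sub (integrableOn_const hfinIcc.ne)).norm
      have hconst : (∫ _t in Ioc a b, ut x) = c n • ut x := by
        rw [setIntegral_const, measureReal_def, Real.volume_Ioc, hba, ENNReal.toReal_ofReal hcp.le]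
      have hrepr : m n x - u'0 x = (c n)⁻¹ • ∫ t in Ioc a b, (ut t - ut x) := by
        rw [integral_sub hbaH (integrableOn_const hfinIoc.ne), hconst]
        simp only [hmdef]
        rw [← hbdef, ← hadef, hm1, hm2, smul_sub, smul_smul,
          inv_mul_cancel₀ hcp.ne', one_smul, hutx]
      have hball : Metric.closedBall (w n) (c n / 2) = Icc a b := by
        rw [Real.closedBall_eq_Icc]
        have e1 : w n - c n / 2 = a := by simp only [hwdef, hadef]; ring
        have e2 : w n + c n / 2 = b := by simp only [hwdef, hbdef]; ring
        rw [e1, e2]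
      have havg : (⨍ y in Metric.closedBall (w n) (c n / 2), ‖ut y - ut x‖)
          = (c n)⁻¹ * ∫ t in Icc a b, ‖ut t - ut x‖ := by
        rw [hball, setAverage_eq, measureReal_def, Real.volume_Icc, hba, ENNReal.toReal_ofReal hcp.le,
          smul_eq_mul]
      rw [hrepr, havg]
      calc ‖(c n)⁻¹ • ∫ t in Ioc a b, (ut t - ut x)‖
          = (c n)⁻¹ * ‖∫ t in Ioc a b, (ut t - ut x)‖ := by
            rw [norm_smul, Real.norm_eq_abs, abs_of_pos (inv_pos.mpr hcp)]
        _ ≤ (c n)⁻¹ * ∫ t in Ioc a b, ‖ut t - ut x‖ := by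
            gcongr
            exact norm_integral_le_integral_norm _
        _ ≤ (c n)⁻¹ * ∫ t in Icc a b, ‖ut t - ut x‖ := by
            refine mul_le_mul_of_nonneg_left ?_ (inv_nonneg.mpr hcp.le)
            exact setIntegral_mono_set hIccInt (Eventually.of_forall fun y => norm_nonneg _)
              (HasSubset.Subset.eventuallyLE Ioc_subset_Icc_self)
    refine tendsto_iff_norm_sub_tendsto_zero.mpr ?_
    exact squeeze_zero (fun n => norm_nonneg _) key hx2
  -- the discretized lower bounds
  set F : ℕ → ℝ → ℝ≥0∞ := fun n t => ENNReal.ofReal (Ψ 0 (u0 (κ n t)) (m n t)) with hFdef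
  have hFmeas : ∀ n, Measurable (F n) :=
    fun n => LiminfDissipAux.measurable_comp_countable (hκmeas n) (hκcount n)
      (H := fun v t => ENNReal.ofReal (Ψ 0 (u0 v) ((c n)⁻¹ • (u0 (v + c n) - u0 v))))
      (fun v => measurable_const)
  have hpt : ∀ᵐ t ∂(volume.restrict S),
      ENNReal.ofReal (Ψ 0 (u0 t) (u'0 t)) ≤ Filter.liminf (fun n => F n t) atTop := by
    filter_upwards [hmtend, ae_restrict_mem measurableSet_Ioc] with t hmt htS
    have htIcc : t ∈ Icc (0:ℝ) T := Ioc_subset_Icc_self htS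
    have hκIcc : ∀ n, κ n t ∈ Icc (0:ℝ) T := by
      intro n
      obtain ⟨h0, hlt, hle, hT'⟩ := hκprop n t htS
      exact ⟨h0, by linarith [hcpos n]⟩
    have hκt : Tendsto (fun n => κ n t) atTop (𝓝[Icc (0:ℝ) T] t) := by
      rw [tendsto_nhdsWithin_iff]
      constructor
      · have h1 : ∀ n, t - c n ≤ κ n t := fun n => by linarith [(hκprop n t htS).2.2.1]
        have h2 : ∀ n, κ n t ≤ t := fun n => ((hκprop n t htS).2.1).le
        have hlow : Tendsto (fun n => t - c n) atTop (𝓝 t) := by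
          simpa using tendsto_const_nhds.sub hctend
        exact tendsto_of_tendsto_of_tendsto_of_le_of_le hlow tendsto_const_nhds h1 h2
      · exact Eventually.of_forall fun n => hκIcc n
    have hwk : Tendsto (fun n => u0 (κ n t)) atTop (𝓝 (u0 t)) :=
      ((hu0cont t htIcc).tendsto).comp hκt
    have hgam := (hgamma (fun _ => 0) (fun n => u0 (κ n t)) (u0 t)
      (fun _ => ⟨le_rfl, zero_le_one⟩) tendsto_const_nhds
      (fun n => hK0 _ (hκIcc n)) (hK0 t htIcc) hwk).1 (u'0 t) (fun n => m n t) hmt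
    exact LiminfDissipAux.ofReal_le_liminf_ofReal hgam
  have hfatou : (∫⁻ t in S, ENNReal.ofReal (Ψ 0 (u0 t) (u'0 t)))
      ≤ Filter.liminf (fun n => ∫⁻ t in S, F n t) atTop :=
    le_trans (lintegral_mono_ae hpt) (lintegral_liminf_le fun n => hFmeas n)
  refine hfatou.trans ?_
  apply ENNReal.le_of_forall_pos_le_add
  intro ρ hρ hLtop
  set Cg' : ℝ := max Cg 0 with hCg'def
  have hCg'0 : 0 ≤ Cg' := le_max_right _ _
  obtain ⟨θ, hθpos, hθ⟩ : ∃ θ : ℝ, 0 < θ ∧ ω θ * Cg' < (ρ:ℝ) := by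
    have htend : Tendsto (fun s : ℝ => ω s * Cg') (𝓝 0) (𝓝 0) := by
      have h := (hωcont.tendsto 0).mul_const Cg'
      rwa [hω0, zero_mul] at h
    have hev : ∀ᶠ s : ℝ in 𝓝 0, ω s * Cg' < (ρ:ℝ) :=
      htend.eventually_lt_const (by exact_mod_cast hρ)
    rcases Metric.eventually_nhds_iff.mp hev with ⟨δ', hδ', h⟩
    refine ⟨δ'/2, half_pos hδ', h ?_⟩
    rw [Real.dist_eq, sub_zero, abs_of_pos (half_pos hδ')]
    linarith
  obtain ⟨δ, hδpos, hδ⟩ : ∃ δ : ℝ, 0 < δ ∧ ∀ x ∈ Icc (0:ℝ) T, ∀ y ∈ Icc (0:ℝ) T,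
      |x - y| < δ → ‖u0 x - u0 y‖ < θ/2 := by
    have huc := isCompact_Icc.uniformContinuousOn_of_continuous hu0cont
    rw [Metric.uniformContinuousOn_iff] at huc
    obtain ⟨δ, hδpos, h⟩ := huc (θ/2) (half_pos hθpos)
    refine ⟨δ, hδpos, fun x hx y hy hxy => ?_⟩
    have h2 := h x hx y hy (by rwa [Real.dist_eq])
    rwa [dist_eq_norm] at h2
  have claim : ∀ n : ℕ, c n < δ → (∫⁻ t in S, F n t) ≤ L + (ρ : ℝ≥0∞) := by
    intro n hn
    set P : ℕ → Set ℝ := fun j => if j ≤ n then Ioc ((j:ℝ) * c n) (((j:ℝ)+1) * c n) else ∅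
      with hPdef
    have hPmeas : ∀ j, MeasurableSet (P j) := by
      intro j
      by_cases h : j ≤ n <;> simp [hPdef, h]
    have hPdisj : Pairwise (Function.onFun Disjoint P) := by
      have key : ∀ i j : ℕ, i < j → Disjoint (P i) (P j) := by
        intro i j h
        by_cases hi : i ≤ n
        swap
        · simp [hPdef, hi]
        by_cases hj : j ≤ n
        swap
        · simp [hPdef, hj]
        simp only [hPdef, if_pos hi, if_pos hj]
        rw [Set.Ioc_disjoint_Ioc]
        have h1 : (i:ℝ) + 1 ≤ (j:ℝ) := by exact_mod_cast h
        calc min (((i:ℝ)+1) * c n) (((j:ℝ)+1) * c n) ≤ ((i:ℝ)+1) * c n := min_le_left _ _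
          _ ≤ (j:ℝ) * c n := mul_le_mul_of_nonneg_right h1 (hcpos n).le
          _ ≤ max ((i:ℝ) * c n) ((j:ℝ) * c n) := le_max_right _ _
      intro i j hij
      rcases hij.lt_or_gt with h | h
      · exact key i j h
      · exact (key j i h).symm
    have hPj : ∀ j : ℕ, j ≤ n → P j = Ioc ((j:ℝ) * c n) (((j:ℝ)+1) * c n) := by
      intro j hj
      simp only [hPdef, if_pos hj]
    have hPunion : (⋃ j, P j) = S := by
      apply Subset.antisymm
      · refine iUnion_subset fun j => ?_
        by_cases hj : j ≤ n
        · rw [hPj j hj]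
          intro t ht
          have hj1 : (j:ℝ) + 1 ≤ (n:ℝ) + 1 := by exact_mod_cast Nat.succ_le_succ hj
          refine ⟨lt_of_le_of_lt (by positivity) ht.1, le_trans ht.2 ?_⟩
          calc ((j:ℝ)+1) * c n ≤ ((n:ℝ)+1) * c n := mul_le_mul_of_nonneg_right hj1 (hcpos n).le
            _ = T := hcT n
        · simp [hPdef, hj]
      · intro t ht
        have hz1 : 0 < ⌈t / c n⌉ := Int.ceil_pos.mpr (div_pos ht.1 (hcpos n))
        have hz2 : ⌈t / c n⌉ ≤ (n:ℤ) + 1 := by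
          apply Int.ceil_le.mpr
          push_cast
          rw [div_le_iff₀ (hcpos n)]
          calc t ≤ T := ht.2
            _ = ((n:ℝ)+1) * c n := (hcT n).symm
        set j : ℕ := (⌈t / c n⌉ - 1).toNat with hjdef
        have hjcast : ((j:ℤ)) = ⌈t / c n⌉ - 1 := Int.toNat_of_nonneg (by omega)
        have hjle : j ≤ n := by omega
        have hjr : ((j:ℝ)) = (⌈t / c n⌉ : ℝ) - 1 := by exact_mod_cast hjcast
        refine mem_iUnion.mpr ⟨j, ?_⟩
        rw [hPj j hjle]
        constructor
        · rw [hjr]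
          have h1 : ((⌈t / c n⌉ : ℝ) - 1) < t / c n := by
            have := Int.ceil_lt_add_one (t / c n)
            linarith
          calc ((⌈t / c n⌉ : ℝ) - 1) * c n < (t / c n) * c n :=
                mul_lt_mul_of_pos_right h1 (hcpos n)
            _ = t := div_mul_cancel₀ t (hcpos n).ne'
        · have h1 : t / c n ≤ (⌈t / c n⌉ : ℝ) := Int.le_ceil _
          have h2 : ((j:ℝ)) + 1 = (⌈t / c n⌉ : ℝ) := by rw [hjr]; ring
          rw [h2]
          calc t = (t / c n) * c n := (div_mul_cancel₀ t (hcpos n).ne').symm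
            _ ≤ (⌈t / c n⌉ : ℝ) * c n := mul_le_mul_of_nonneg_right h1 (hcpos n).le
    have hsplit : ∀ f : ℝ → ℝ≥0∞, (∫⁻ t in S, f t) = ∑' j, ∫⁻ t in P j, f t := by
      intro f
      rw [← hPunion, Measure.restrict_iUnion hPdisj hPmeas, lintegral_sum_measure]
    have hjc : ∀ j : ℕ, (∫⁻ t in P j, F n t)
        ≤ Filter.liminf
            (fun k => ∫⁻ t in P j, ENNReal.ofReal (Ψ (εk k) (u0 (κ n t)) (u'k k t))) atTop := by
      intro j
      by_cases hj : j ≤ n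
      swap
      · simp [hPdef, hj]
      have haj0 : (0:ℝ) ≤ (j:ℝ) * c n := by positivity
      have hajbj : (j:ℝ) * c n ≤ ((j:ℝ)+1) * c n :=
        mul_le_mul_of_nonneg_right (by linarith) (hcpos n).le
      have hbjT : ((j:ℝ)+1) * c n ≤ T := by
        have hj1 : (j:ℝ) + 1 ≤ (n:ℝ) + 1 := by exact_mod_cast Nat.succ_le_succ hj
        calc ((j:ℝ)+1) * c n ≤ ((n:ℝ)+1) * c n := mul_le_mul_of_nonneg_right hj1 (hcpos n).le
          _ = T := hcT n
      have hajc : (j:ℝ) * c n + c n = ((j:ℝ)+1) * c n := by ring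
      have hμPj : volume (P j) = ENNReal.ofReal (c n) := by
        rw [hPj j hj, Real.volume_Ioc]
        congr 1
        ring
      have hajIcc : (j:ℝ) * c n ∈ Icc (0:ℝ) T := ⟨haj0, le_trans hajbj hbjT⟩
      have hbjIcc : ((j:ℝ)+1) * c n ∈ Icc (0:ℝ) T := ⟨le_trans haj0 hajbj, hbjT⟩
      set Mj : V := (c n)⁻¹ • (u0 (((j:ℝ)+1) * c n) - u0 ((j:ℝ) * c n)) with hMjdef
      have hFval : ∀ t ∈ P j, F n t = ENNReal.ofReal (Ψ 0 (u0 ((j:ℝ) * c n)) Mj) := by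
        intro t ht
        rw [hPj j hj] at ht
        have hκt : κ n t = (j:ℝ) * c n := hκeq n j t ht
        simp only [hFdef, hmdef, hMjdef, hκt, hajc]
      have hFint : (∫⁻ t in P j, F n t)
          = ENNReal.ofReal (c n * Ψ 0 (u0 ((j:ℝ) * c n)) Mj) := by
        rw [setLIntegral_congr_fun (hPmeas j) hFval, setLIntegral_const, hμPj,
          mul_comm, ← ENNReal.ofReal_mul (hcpos n).le]
      have hvbavg : ∀ k : ℕ, (c n)⁻¹ • (uk k (((j:ℝ)+1) * c n) - uk k ((j:ℝ) * c n))
          = (c n)⁻¹ • ∫ t in P j, u'k k t := by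
        intro k
        rw [hPj j hj]
        congr 1
        exact hdiff (u'k k) (hW11k k).1 (uk k) (hW11k k).2 haj0 hajbj hbjT
      have hvlim : Tendsto
          (fun k => (c n)⁻¹ • (uk k (((j:ℝ)+1) * c n) - uk k ((j:ℝ) * c n))) atTop (𝓝 Mj) := by
        rw [hMjdef]
        exact ((hptwise _ hbjIcc).sub (hptwise _ hajIcc)).const_smul _
      have hgam := (hgamma εk (fun _ => u0 ((j:ℝ) * c n)) (u0 ((j:ℝ) * c n)) hεk hεk0
        (fun _ => hK0 _ hajIcc) (hK0 _ hajIcc) tendsto_const_nhds).1 Mj _ hvlim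
      have hjen : ∀ k : ℕ, ENNReal.ofReal (c n * Ψ (εk k) (u0 ((j:ℝ) * c n))
            ((c n)⁻¹ • (uk k (((j:ℝ)+1) * c n) - uk k ((j:ℝ) * c n))))
          ≤ ∫⁻ t in P j, ENNReal.ofReal (Ψ (εk k) (u0 (κ n t)) (u'k k t)) := by
        intro k
        have hΨk := hΨ (εk k) (hεk k) (u0 ((j:ℝ) * c n))
        have hsubPj : P j ⊆ Ioc 0 T := by
          rw [hPj j hj]
          exact fun t ht => ⟨lt_of_le_of_lt haj0 ht.1, le_trans ht.2 hbjT⟩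
        have hjen0 := LiminfDissipAux.jensen_lintegral hΨk.2.1 hΨk.1 (hcpos n) hμPj
          ((hW11k k).1.mono_set hsubPj)
        rw [hvbavg k]
        refine le_trans hjen0 (le_of_eq ?_)
        refine setLIntegral_congr_fun (hPmeas j) (fun t ht => ?_)
        rw [hPj j hj] at ht
        rw [hκeq n j t ht]
      have hlim2 := LiminfDissipAux.ofReal_le_liminf_of_eventually (hcpos n).le
        (fun ρ' hρ' => LiminfDissipAux.eventually_of_ereal_liminf hgam hρ')
      rw [hFint]
      exact hlim2.trans (Filter.liminf_le_liminf (Eventually.of_forall hjen)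
        (by isBoundedDefault) (by isBoundedDefault))
    have hstep1 : (∫⁻ t in S, F n t) ≤ Filter.liminf
        (fun k => ∫⁻ t in S, ENNReal.ofReal (Ψ (εk k) (u0 (κ n t)) (u'k k t))) atTop := by
      rw [hsplit (F n)]
      calc (∑' j, ∫⁻ t in P j, F n t)
          ≤ ∑' j, Filter.liminf
              (fun k => ∫⁻ t in P j, ENNReal.ofReal (Ψ (εk k) (u0 (κ n t)) (u'k k t))) atTop :=
            ENNReal.tsum_le_tsum hjc
        _ ≤ Filter.liminf (fun k => ∑' j,
              ∫⁻ t in P j, ENNReal.ofReal (Ψ (εk k) (u0 (κ n t)) (u'k k t))) atTop :=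
            LiminfDissipAux.tsum_liminf_le
        _ = Filter.liminf
              (fun k => ∫⁻ t in S, ENNReal.ofReal (Ψ (εk k) (u0 (κ n t)) (u'k k t))) atTop := by
            congr 1
            funext k
            exact (hsplit _).symm
    have hstep2 : ∀ᶠ k in atTop,
        (∫⁻ t in S, ENNReal.ofReal (Ψ (εk k) (u0 (κ n t)) (u'k k t)))
          ≤ (∫⁻ t in S, ENNReal.ofReal (Ψ (εk k) (uk k t) (u'k k t)))
              + ENNReal.ofReal (ω θ * Cg') := by
      have hun : ∀ᶠ k in atTop, ∀ x ∈ Icc (0:ℝ) T, dist (u0 x) (uk k x) < θ/2 := by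
        have h := Metric.tendstoUniformlyOn_iff.mp ha (θ/2) (half_pos hθpos)
        filter_upwards [h] with k hk x hx using hk x hx
      filter_upwards [hun] with k hk
      have hUaes := (hW11k k).1.aestronglyMeasurable
      set U : ℝ → V := hUaes.mk (u'k k) with hUdef
      have hUae : u'k k =ᵐ[volume.restrict S] U := hUaes.ae_eq_mk
      have hUmeas : Measurable U := hUaes.stronglyMeasurable_mk.measurable
      have hptb : ∀ t ∈ S, ∀ v : V,
          Ψ (εk k) (u0 (κ n t)) v ≤ Ψ (εk k) (uk k t) v + ω θ * g ‖v‖ := by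
        intro t htS v
        have htIcc : t ∈ Icc (0:ℝ) T := Ioc_subset_Icc_self htS
        obtain ⟨h0, hlt, hle, hT'⟩ := hκprop n t htS
        have hκIcc : κ n t ∈ Icc (0:ℝ) T := ⟨h0, by linarith [hcpos n]⟩
        have hd1 : ‖u0 (κ n t) - u0 t‖ < θ/2 := by
          apply hδ _ hκIcc _ htIcc
          rw [abs_sub_lt_iff]
          constructor <;> linarith
        have hd2 : ‖u0 t - uk k t‖ < θ/2 := by
          have h2 := hk t htIcc
          rwa [dist_eq_norm] at h2
        have hdist : ‖u0 (κ n t) - uk k t‖ ≤ θ := by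
          have htri := dist_triangle (u0 (κ n t)) (u0 t) (uk k t)
          rw [dist_eq_norm, dist_eq_norm, dist_eq_norm] at htri
          linarith
        have habs := hunif (εk k) (hεk k) (u0 (κ n t)) (hK0 _ hκIcc) (uk k t) (hKk k t htIcc) v
        have hA : Ψ (εk k) (u0 (κ n t)) v - Ψ (εk k) (uk k t) v
            ≤ ω ‖u0 (κ n t) - uk k t‖ * g ‖v‖ := le_trans (le_abs_self _) habs
        have hω' : ω ‖u0 (κ n t) - uk k t‖ * g ‖v‖ ≤ ω θ * g ‖v‖ :=
          mul_le_mul_of_nonneg_right (hωmono hdist) (hg0 _)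
        linarith
      set Htil : ℝ → ℝ≥0∞ := fun t => ENNReal.ofReal (Ψ (εk k) (u0 (κ n t)) (U t))
        with hHtildef
      have hHmeas : Measurable Htil := by
        apply LiminfDissipAux.measurable_comp_countable (hκmeas n) (hκcount n)
          (H := fun v t => ENNReal.ofReal (Ψ (εk k) (u0 v) (U t)))
        intro v
        exact ENNReal.measurable_ofReal.comp
          (((hΨ (εk k) (hεk k) (u0 v)).1.measurable).comp hUmeas)
      set cre : ℝ → ℝ := S.piecewise (fun t => Ψ (εk k) (uk k t) (U t)) (fun _ => (0:ℝ))
        with hcredef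
      have hcremeas : Measurable cre := by
        have hDm : ∀ m : ℕ, Measurable
            (S.piecewise (fun t => Ψ (εk k) (uk k (κ m t)) (U t)) (fun _ => (0:ℝ))) := by
          intro m
          refine Measurable.piecewise measurableSet_Ioc ?_ measurable_const
          exact LiminfDissipAux.measurable_comp_countable (hκmeas m) (hκcount m)
            (H := fun v t => Ψ (εk k) (uk k v) (U t))
            (fun v => ((hΨ (εk k) (hεk k) (uk k v)).1.measurable).comp hUmeas)
        apply measurable_of_tendsto_metrizable hDm
        rw [tendsto_pi_nhds]
        intro t
        by_cases htS : t ∈ S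
        · have htIcc : t ∈ Icc (0:ℝ) T := Ioc_subset_Icc_self htS
          have hκIcc : ∀ m, κ m t ∈ Icc (0:ℝ) T := fun m =>
            ⟨(hκprop m t htS).1, by linarith [(hκprop m t htS).2.2.2, hcpos m]⟩
          have hκt : Tendsto (fun m => κ m t) atTop (𝓝[Icc (0:ℝ) T] t) := by
            rw [tendsto_nhdsWithin_iff]
            constructor
            · have h1 : ∀ m, t - c m ≤ κ m t := fun m => by
                linarith [(hκprop m t htS).2.2.1]
              have h2 : ∀ m, κ m t ≤ t := fun m => ((hκprop m t htS).2.1).le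
              have hlow : Tendsto (fun m => t - c m) atTop (𝓝 t) := by
                simpa using tendsto_const_nhds.sub hctend
              exact tendsto_of_tendsto_of_tendsto_of_le_of_le hlow tendsto_const_nhds h1 h2
            · exact Eventually.of_forall hκIcc
          have hukt : Tendsto (fun m => uk k (κ m t)) atTop (𝓝 (uk k t)) :=
            ((hukcont k t htIcc).tendsto).comp hκt
          have hbound : ∀ m : ℕ,
              ‖S.piecewise (fun s => Ψ (εk k) (uk k (κ m s)) (U s)) (fun _ => (0:ℝ)) t
                - cre t‖ ≤ ω ‖uk k (κ m t) - uk k t‖ * g ‖U t‖ := by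
            intro m
            rw [hcredef, Set.piecewise_eq_of_mem _ _ _ htS, Set.piecewise_eq_of_mem _ _ _ htS,
              Real.norm_eq_abs]
            exact hunif (εk k) (hεk k) _ (hKk k _ (hκIcc m)) _ (hKk k t htIcc) (U t)
          have hz : Tendsto (fun m => ω ‖uk k (κ m t) - uk k t‖ * g ‖U t‖) atTop (𝓝 0) := by
            have h1 : Tendsto (fun m => ‖uk k (κ m t) - uk k t‖) atTop (𝓝 0) :=
              tendsto_iff_norm_sub_tendsto_zero.mp hukt
            have h2 : Tendsto (fun m => ω ‖uk k (κ m t) - uk k t‖) atTop (𝓝 (ω 0)) :=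
              (hωcont.tendsto 0).comp h1
            rw [hω0] at h2
            simpa using h2.mul_const (g ‖U t‖)
          rw [tendsto_iff_norm_sub_tendsto_zero]
          exact squeeze_zero (fun m => norm_nonneg _) hbound hz
        · have hzero : ∀ m : ℕ,
              S.piecewise (fun s => Ψ (εk k) (uk k (κ m s)) (U s)) (fun _ => (0:ℝ)) t = 0 :=
            fun m => Set.piecewise_eq_of_notMem _ _ _ htS
          have hcre0 : cre t = 0 := by
            rw [hcredef]
            exact Set.piecewise_eq_of_notMem _ _ _ htS
          rw [hcre0]
          simp only [hzero]
          exact tendsto_const_nhds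
      set Ctil : ℝ → ℝ≥0∞ := fun t => ENNReal.ofReal (cre t) with hCtildef
      have hCmeas : Measurable Ctil := ENNReal.measurable_ofReal.comp hcremeas
      have hae1 : (fun t => ENNReal.ofReal (Ψ (εk k) (u0 (κ n t)) (u'k k t)))
          =ᵐ[volume.restrict S] Htil := by
        filter_upwards [hUae] with t ht
        simp only [hHtildef, ht]
      have hae2 : Ctil =ᵐ[volume.restrict S]
          (fun t => ENNReal.ofReal (Ψ (εk k) (uk k t) (u'k k t))) := by
        filter_upwards [hUae, ae_restrict_mem measurableSet_Ioc] with t ht htS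
        simp only [hCtildef, hcredef, Set.piecewise_eq_of_mem _ _ _ htS, ht]
      have haeg : (fun t => ENNReal.ofReal (g ‖U t‖))
          =ᵐ[volume.restrict S] (fun t => ENNReal.ofReal (g ‖u'k k t‖)) := by
        filter_upwards [hUae] with t ht
        rw [ht]
      have hptae : ∀ᵐ t ∂(volume.restrict S),
          Htil t ≤ Ctil t + ENNReal.ofReal (ω θ) * ENNReal.ofReal (g ‖U t‖) := by
        filter_upwards [ae_restrict_mem measurableSet_Ioc] with t htS
        have hb := hptb t htS (U t)
        calc Htil t ≤ ENNReal.ofReal (Ψ (εk k) (uk k t) (U t) + ω θ * g ‖U t‖) := by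
              simp only [hHtildef]
              exact ENNReal.ofReal_le_ofReal hb
          _ ≤ ENNReal.ofReal (Ψ (εk k) (uk k t) (U t)) + ENNReal.ofReal (ω θ * g ‖U t‖) :=
              ENNReal.ofReal_add_le
          _ = Ctil t + ENNReal.ofReal (ω θ) * ENNReal.ofReal (g ‖U t‖) := by
              rw [ENNReal.ofReal_mul (hωnonneg θ)]
              congr 1
              simp only [hCtildef, hcredef, Set.piecewise_eq_of_mem _ _ _ htS]
      have hmin : ∀ t, Htil t ≤ min (Htil t) (Ctil t) + (Htil t - Ctil t) := by
        intro t
        rcases le_total (Htil t) (Ctil t) with h | h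
        · rw [min_eq_left h]
          exact le_self_add
        · rw [min_eq_right h, add_tsub_cancel_of_le h]
      have hsub : ∀ᵐ t ∂(volume.restrict S),
          Htil t - Ctil t ≤ ENNReal.ofReal (ω θ) * ENNReal.ofReal (g ‖U t‖) := by
        filter_upwards [hptae] with t ht
        exact tsub_le_iff_left.mpr ht
      calc (∫⁻ t in S, ENNReal.ofReal (Ψ (εk k) (u0 (κ n t)) (u'k k t)))
          = ∫⁻ t in S, Htil t := lintegral_congr_ae hae1
        _ ≤ ∫⁻ t in S, (min (Htil t) (Ctil t) + (Htil t - Ctil t)) := lintegral_mono hmin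
        _ = (∫⁻ t in S, min (Htil t) (Ctil t)) + ∫⁻ t in S, (Htil t - Ctil t) :=
            lintegral_add_left (hHmeas.min hCmeas) _
        _ ≤ (∫⁻ t in S, Ctil t)
              + ∫⁻ t in S, ENNReal.ofReal (ω θ) * ENNReal.ofReal (g ‖U t‖) :=
            add_le_add (lintegral_mono fun t => min_le_right _ _) (lintegral_mono_ae hsub)
        _ = (∫⁻ t in S, Ctil t)
              + ENNReal.ofReal (ω θ) * ∫⁻ t in S, ENNReal.ofReal (g ‖U t‖) := by
            rw [lintegral_const_mul' _ _ ENNReal.ofReal_ne_top]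
        _ ≤ (∫⁻ t in S, ENNReal.ofReal (Ψ (εk k) (uk k t) (u'k k t)))
              + ENNReal.ofReal (ω θ) * ENNReal.ofReal Cg' := by
            refine add_le_add (le_of_eq (lintegral_congr_ae hae2)) (mul_le_mul_right ?_ _)
            rw [lintegral_congr_ae haeg]
            exact le_trans (hc k) (ENNReal.ofReal_le_ofReal (le_max_left _ _))
        _ = (∫⁻ t in S, ENNReal.ofReal (Ψ (εk k) (uk k t) (u'k k t)))
              + ENNReal.ofReal (ω θ * Cg') := by
            rw [ENNReal.ofReal_mul (hωnonneg θ)]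
    have hend : Filter.liminf
        (fun k => ∫⁻ t in S, ENNReal.ofReal (Ψ (εk k) (u0 (κ n t)) (u'k k t))) atTop
        ≤ L + ENNReal.ofReal (ω θ * Cg') := by
      refine le_trans (Filter.liminf_le_liminf hstep2 (by isBoundedDefault)
        (by isBoundedDefault)) ?_
      exact LiminfDissipAux.liminf_add_const_le
    refine hstep1.trans (hend.trans ?_)
    refine add_le_add le_rfl ?_
    calc ENNReal.ofReal (ω θ * Cg') ≤ ENNReal.ofReal (ρ:ℝ) := ENNReal.ofReal_le_ofReal hθ.le
      _ = (ρ : ℝ≥0∞) := ENNReal.ofReal_coe_nnreal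
  have hev : ∀ᶠ n in atTop, (∫⁻ t in S, F n t) ≤ L + (ρ : ℝ≥0∞) := by
    filter_upwards [hctend.eventually_lt_const hδpos] with n hn using claim n hn
  exact Filter.liminf_le_of_frequently_le hev.frequently (by isBoundedDefault)
end
end
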